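/- arXiv:math/0207276 — 6 statements merged into one kernel-verified Lean document; each statement's English description precedes it below -/
import Mathlib

section
/- For every nonzero real t, ∏_{k=1}^∞ (1 - 2it/(k(k+1))) = cos((π/2)√(1+8it)) / (−2πit), where the square root is a branch with (√(1+8it))² = 1 + 8it. -/
open Filter Real

/-- For nonzero real `t`, `∏_{k=1}^∞ (1 - 2it/(k(k+1))) = cos((π/2)√(1+8it)) / (-2πit)`,
where `s` is any branch of the square root, i.e. `s^2 = 1 + 8it`. -/
theorem stmt5 (t : ℝ) (ht : t ≠ 0) (s : ℂ) (hs : s ^ 2 = 1 + 8 * Complex.I * t) :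
    Tendsto (fun N : ℕ => ∏ k ∈ Finset.Icc 1 N,
        (1 - 2 * Complex.I * t / (k * (k + 1)))) atTop
      (nhds (Complex.cos (π / 2 * s) / (-2 * π * Complex.I * t))) := by
  obtain ⟨α, hα⟩ : ∃ α : ℂ, α = (s - 1) / 2 := ⟨_, rfl⟩
  have hprod : α * (1 + α) = 2 * Complex.I * t := by
    have h : α * (1 + α) = (s ^ 2 - 1) / 4 := by rw [hα]; ring
    rw [h, hs]; ring
  have hIt : (2 : ℂ) * Complex.I * t ≠ 0 := by
    simp [Complex.I_ne_zero, Complex.ofReal_ne_zero, ht]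
  have hne : α ≠ 0 := by
    intro h0
    rw [h0, zero_mul] at hprod
    exact hIt hprod.symm
  have h1α : (1 : ℂ) + α ≠ 0 := by
    intro h0
    rw [h0, mul_zero] at hprod
    exact hIt hprod.symm
  have hπ : ((π : ℂ)) ≠ 0 := by exact_mod_cast Real.pi_ne_zero
  have hπα : (π : ℂ) * α ≠ 0 := mul_ne_zero hπ hne
  have key : ∀ N : ℕ, ∏ k ∈ Finset.Icc 1 N, (1 - 2 * Complex.I * t / (k * (k + 1)))
      = (∏ j ∈ Finset.range N, (1 - α ^ 2 / ((j : ℂ) + 1) ^ 2)) * (1 + α / ((N : ℂ) + 1))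
        / (1 + α) := by
    intro N
    induction N with
    | zero => simp [div_self h1α]
    | succ n ih =>
      rw [Finset.prod_Icc_succ_top (by omega : 1 ≤ n + 1), ih, Finset.prod_range_succ]
      have hn1 : ((n : ℂ) + 1) ≠ 0 := Nat.cast_add_one_ne_zero n
      have hn2 : ((n : ℂ) + 1 + 1) ≠ 0 := by
        intro h0
        apply Nat.cast_add_one_ne_zero (R := ℂ) (n + 1)
        push_cast
        linear_combination h0
      push_cast
      rw [← hprod]
      field_simp
      ring
  have h1 : Tendsto (fun N : ℕ => ∏ j ∈ Finset.range N, (1 - α ^ 2 / ((j : ℂ) + 1) ^ 2))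
      atTop (nhds (Complex.sin ((π : ℂ) * α) / ((π : ℂ) * α))) := by
    have h := (Complex.tendsto_euler_sin_prod α).div_const ((π : ℂ) * α)
    exact h.congr fun n => mul_div_cancel_left₀ _ hπα
  have h2 : Tendsto (fun N : ℕ => 1 + α / ((N : ℂ) + 1)) atTop (nhds 1) := by
    have h0 : Tendsto (fun N : ℕ => α / ((N : ℂ) + 1)) atTop (nhds 0) := by
      have hc : Tendsto (fun N : ℕ => ((1 / ((N : ℝ) + 1) : ℝ) : ℂ)) atTop
          (nhds ((0 : ℝ) : ℂ)) :=
        (Complex.continuous_ofReal.tendsto _).comp tendsto_one_div_add_atTop_nhds_zero_nat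
      have := hc.const_mul α
      simpa [div_eq_mul_inv, mul_comm] using this
    simpa using tendsto_const_nhds.add h0
  have h3 := (h1.mul h2).div_const (1 + α)
  have hval : Complex.sin ((π : ℂ) * α) / ((π : ℂ) * α) * 1 / (1 + α)
      = Complex.cos (π / 2 * s) / (-2 * π * Complex.I * t) := by
    have hsu : ((π : ℂ) / 2 * s) = (π : ℂ) * α + (π : ℂ) / 2 := by rw [hα]; ring
    have hden : (-2 * (π : ℂ) * Complex.I * t) = -(π : ℂ) * (α * (1 + α)) := by
      rw [hprod]; ring
    rw [hsu, hden, Complex.cos_add_pi_div_two, mul_one, div_div, neg_mul, div_neg,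
      neg_div, neg_neg, mul_assoc]
  rw [← hval]
  exact h3.congr fun N => (key N).symm
end

section
/- Let α, β be complex numbers with α + β = −1 and such that α, β are not nonnegative integers. Then ∏_{k=1}^∞ ((k−α)(k−β))/(k(k+1)) = 1/(αβ Γ(−α)Γ(−β)). -/
open Filter Nat

/-- For `α, β ∈ ℂ` with `α + β = -1` and neither a nonnegative integer,
`∏_{k=1}^∞ ((k-α)(k-β))/(k(k+1)) = 1/(αβ Γ(-α)Γ(-β))`. -/
theorem stmt6 (α β : ℂ) (hab : α + β = -1)
    (hα : ∀ n : ℕ, α ≠ n) (hβ : ∀ n : ℕ, β ≠ n) :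
    Tendsto (fun N : ℕ => ∏ k ∈ Finset.Icc 1 N,
        (((k : ℂ) - α) * ((k : ℂ) - β)) / ((k : ℂ) * (k + 1))) atTop
      (nhds (1 / (α * β * Complex.Gamma (-α) * Complex.Gamma (-β)))) := by
  have hβa : β = -1 - α := by linear_combination hab
  have hnegβ : -β = 1 + α := by rw [hβa]; ring
  have hc : (-α) * (1 + α) = α * β := by rw [hβa]; ring
  have hα0 : -α ≠ 0 := by
    simpa using fun h => hα 0 (by simpa using h)
  have hα1 : (1 : ℂ) + α ≠ 0 := by
    intro h
    exact hβ 0 (by rw [hβa]; push_cast; linear_combination -h)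
  have hΓα : Complex.Gamma (-α) ≠ 0 := by
    refine Complex.Gamma_ne_zero fun m h => hα m ?_
    have : α = (m : ℂ) := by linear_combination -h
    exact this
  have hΓβ : Complex.Gamma (1 + α) ≠ 0 := by
    refine Complex.Gamma_ne_zero fun m h => hβ m ?_
    rw [hβa]; push_cast; linear_combination -h
  -- key identity for N ≥ 1
  have key : ∀ N : ℕ, 1 ≤ N →
      (∏ k ∈ Finset.Icc 1 N, (((k : ℂ) - α) * ((k : ℂ) - β)) / ((k : ℂ) * (k + 1)))
        = (N : ℂ) / ((N : ℂ) + 1) *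
          ((1 / ((-α) * (1 + α))) / (Complex.GammaSeq (-α) N * Complex.GammaSeq (1 + α) N)) := by
    intro N hN
    have hN0 : (N : ℂ) ≠ 0 := Nat.cast_ne_zero.mpr (by omega)
    have hN1 : (N : ℂ) + 1 ≠ 0 := by
      have : ((N + 1 : ℕ) : ℂ) ≠ 0 := Nat.cast_ne_zero.mpr (by omega)
      push_cast at this; exact this
    have hfac : ((N ! : ℕ) : ℂ) ≠ 0 := Nat.cast_ne_zero.mpr (Nat.factorial_ne_zero N)
    have hA : ∏ j ∈ Finset.range (N + 1), (-α + (j : ℂ))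
        = -α * ∏ k ∈ Finset.Icc 1 N, ((k : ℂ) - α) := by
      rw [Finset.prod_range_succ', ← Finset.Ico_add_one_right_eq_Icc, Finset.prod_Ico_eq_prod_range]
      simp only [Nat.cast_zero, add_zero, Nat.add_sub_cancel]
      rw [mul_comm]
      congr 1
      refine Finset.prod_congr rfl fun j _ => ?_
      push_cast; ring
    have hB : ∏ j ∈ Finset.range (N + 1), ((1 + α) + (j : ℂ))
        = (1 + α) * ∏ k ∈ Finset.Icc 1 N, ((k : ℂ) - β) := by
      rw [Finset.prod_range_succ', ← Finset.Ico_add_one_right_eq_Icc, Finset.prod_Ico_eq_prod_range]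
      simp only [Nat.cast_zero, add_zero, Nat.add_sub_cancel]
      rw [mul_comm]
      congr 1
      refine Finset.prod_congr rfl fun j _ => ?_
      rw [hβa]; push_cast; ring
    have hA0 : (∏ j ∈ Finset.range (N + 1), (-α + (j : ℂ))) ≠ 0 := by
      refine Finset.prod_ne_zero_iff.mpr fun j _ h => hα j ?_
      linear_combination -h
    have hB0 : (∏ j ∈ Finset.range (N + 1), ((1 + α) + (j : ℂ))) ≠ 0 := by
      refine Finset.prod_ne_zero_iff.mpr fun j _ h => hβ j ?_
      rw [hβa]; push_cast; linear_combination -h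
    have hfacIcc : ∀ M : ℕ, ∏ k ∈ Finset.Icc 1 M, (k : ℂ) = ((M ! : ℕ) : ℂ) := by
      intro M
      induction M with
      | zero => simp
      | succ n ih =>
        rw [Finset.prod_Icc_succ_top (by omega), ih]
        push_cast [Nat.factorial_succ]; ring
    have hfacIcc1 : ∀ M : ℕ, ∏ k ∈ Finset.Icc 1 M, ((k : ℂ) + 1) = (((M + 1)! : ℕ) : ℂ) := by
      intro M
      induction M with
      | zero => simp
      | succ n ih =>
        rw [Finset.prod_Icc_succ_top (by omega), ih]
        push_cast [Nat.factorial_succ]; ring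
    have hpow : (N : ℂ) ^ (-α) * (N : ℂ) ^ ((1 : ℂ) + α) = (N : ℂ) := by
      rw [← Complex.cpow_add _ _ hN0]
      norm_num
    rw [Finset.prod_div_distrib, Finset.prod_mul_distrib, Finset.prod_mul_distrib,
      hfacIcc, hfacIcc1, Complex.GammaSeq, Complex.GammaSeq]
    rw [_root_.div_mul_div_comm, _root_.div_mul_div_comm]
    rw [show (N : ℂ) ^ (-α) * ((N ! : ℕ) : ℂ) * ((N : ℂ) ^ ((1:ℂ) + α) * ((N ! : ℕ) : ℂ))
        = (N : ℂ) * (((N ! : ℕ) : ℂ) * ((N ! : ℕ) : ℂ)) by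
      rw [mul_mul_mul_comm, hpow]]
    rw [hA, hB]
    have hfac1 : (((N + 1)! : ℕ) : ℂ) = ((N : ℂ) + 1) * ((N ! : ℕ) : ℂ) := by
      push_cast [Nat.factorial_succ]; ring
    rw [hfac1]
    have hPA : (∏ k ∈ Finset.Icc 1 N, ((k : ℂ) - α)) ≠ 0 := by
      intro h; apply hA0; rw [hA, h, mul_zero]
    have hPB : (∏ k ∈ Finset.Icc 1 N, ((k : ℂ) - β)) ≠ 0 := by
      intro h; apply hB0; rw [hB, h, mul_zero]
    have hq : α + α ^ 2 ≠ 0 := fun h => (mul_ne_zero hα0 hα1) (by linear_combination -h)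
    field_simp
    have hα' : α ≠ 0 := fun h => hα 0 (by simp [h])
    exact (div_self hα').symm
  -- limit computation
  have hGlim : Tendsto (fun N : ℕ => Complex.GammaSeq (-α) N * Complex.GammaSeq (1 + α) N)
      atTop (nhds (Complex.Gamma (-α) * Complex.Gamma (1 + α))) :=
    (Complex.GammaSeq_tendsto_Gamma (-α)).mul (Complex.GammaSeq_tendsto_Gamma (1 + α))
  have hNlim : Tendsto (fun N : ℕ => (N : ℂ) / ((N : ℂ) + 1)) atTop (nhds 1) :=
    tendsto_natCast_div_add_atTop (1 : ℂ)
  have hmain : Tendsto (fun N : ℕ => (N : ℂ) / ((N : ℂ) + 1) *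
      ((1 / ((-α) * (1 + α))) / (Complex.GammaSeq (-α) N * Complex.GammaSeq (1 + α) N)))
      atTop (nhds (1 * ((1 / ((-α) * (1 + α))) /
        (Complex.Gamma (-α) * Complex.Gamma (1 + α))))) :=
    hNlim.mul (tendsto_const_nhds.div hGlim (mul_ne_zero hΓα hΓβ))
  have heq : 1 * ((1 / ((-α) * (1 + α))) / (Complex.Gamma (-α) * Complex.Gamma (1 + α)))
      = 1 / (α * β * Complex.Gamma (-α) * Complex.Gamma (-β)) := by
    rw [hnegβ, one_mul, hc, div_div, one_div, one_div]
    ring_nf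
  rw [heq] at hmain
  refine hmain.congr' ?_
  filter_upwards [eventually_ge_atTop 1] with N hN
  exact (key N hN).symm
end

section
/- The function f(x) = ∑_{k=2}^∞ (−1)^k e^{−C(k,2)x} C(k,2)(2k−1), defined for x > 0, satisfies ∫_0^∞ f(x) dx = 1; that is, f is a probability density on (0, ∞). -/
open MeasureTheory Real Set Filter Topology HurwitzKernelBounds HurwitzZeta

noncomputable section

namespace Stmt10Aux

/-- `c_k = (k+1)(k+2)/2`. -/
def cc (k : ℕ) : ℝ := ((k : ℝ) + 1) * ((k : ℝ) + 2) / 2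

lemma cc_pos (k : ℕ) : 0 < cc k := by
  have : (0:ℝ) ≤ k := Nat.cast_nonneg k
  unfold cc; nlinarith

lemma one_le_cc (k : ℕ) : 1 ≤ cc k := by
  have : (0:ℝ) ≤ k := Nat.cast_nonneg k
  unfold cc; nlinarith

lemma nat_le_cc (k : ℕ) : (k : ℝ) ≤ cc k := by
  have : (0:ℝ) ≤ k := Nat.cast_nonneg k
  unfold cc; nlinarith

def Pterm (k : ℕ) (x : ℝ) : ℝ := (-1 : ℝ) ^ k * (2 * (k : ℝ) + 3) * Real.exp (-(cc k) * x)

def Dterm (k : ℕ) (x : ℝ) : ℝ :=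
  (-1 : ℝ) ^ k * ((2 * (k : ℝ) + 3) * cc k) * Real.exp (-(cc k) * x)

def Pfun (x : ℝ) : ℝ := ∑' k, Pterm k x

def Dfun (x : ℝ) : ℝ := ∑' k, Dterm k x

lemma hasSum_P {x : ℝ} (hx : 0 < x) :
    HasSum (fun k ↦ Pterm k x)
      (1 - 1 / 2 * Real.exp (x / 8) * sinKernel (↑(4⁻¹ : ℝ)) (x / (8 * π))) := by
  have hπ := Real.pi_pos
  have ht : 0 < x / (8 * π) := by positivity
  have h0 := hasSum_nat_sinKernel (4⁻¹ : ℝ) ht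
  have h1 := h0.mul_left (1 / 2 * Real.exp (x / 8))
  have hinj : Function.Injective (fun j : ℕ ↦ 2 * j + 1) := fun a b h ↦ by simp only at h; omega
  have hvan : ∀ n ∉ Set.range (fun j : ℕ ↦ 2 * j + 1),
      1 / 2 * Real.exp (x / 8) *
        (2 * (n:ℝ) * Real.sin (2 * π * 4⁻¹ * n) * rexp (-π * (n:ℝ) ^ 2 * (x / (8 * π)))) = 0 := by
    intro n hn
    have hev : ∃ m, n = 2 * m := by
      rcases Nat.even_or_odd n with ⟨m, hm⟩ | ⟨m, hm⟩
      · exact ⟨m, by omega⟩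
      · exact absurd ⟨m, show 2 * m + 1 = n by omega⟩ hn
    obtain ⟨m, rfl⟩ := hev
    have : (2 * π * 4⁻¹ * ((2 * m : ℕ) : ℝ)) = (m : ℝ) * π := by push_cast; ring
    rw [this, Real.sin_nat_mul_pi]
    ring
  have h2 := (hinj.hasSum_iff hvan).mpr h1
  have key : ∀ j : ℕ,
      (1 / 2 * Real.exp (x / 8) *
        (2 * ((2 * j + 1 : ℕ) : ℝ) * Real.sin (2 * π * 4⁻¹ * ((2 * j + 1 : ℕ) : ℝ)) *
          rexp (-π * ((2 * j + 1 : ℕ) : ℝ) ^ 2 * (x / (8 * π)))))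
      = (-1 : ℝ) ^ j * (2 * (j : ℝ) + 1) * Real.exp (-((j : ℝ) * ((j : ℝ) + 1) / 2) * x) := by
    intro j
    have hsin : Real.sin (2 * π * 4⁻¹ * ((2 * j + 1 : ℕ) : ℝ)) = (-1 : ℝ) ^ j := by
      have : (2 * π * 4⁻¹ * ((2 * j + 1 : ℕ) : ℝ)) = (j : ℝ) * π + π / 2 := by push_cast; ring
      rw [this, Real.sin_add_pi_div_two]
      have := Real.cos_nat_mul_pi_sub 0 j
      simpa using this
    rw [hsin]
    have hexp : Real.exp (x / 8) * rexp (-π * ((2 * j + 1 : ℕ) : ℝ) ^ 2 * (x / (8 * π)))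
        = Real.exp (-((j : ℝ) * ((j : ℝ) + 1) / 2) * x) := by
      rw [← Real.exp_add]
      congr 1
      have h8 : -π * ((2 * j + 1 : ℕ) : ℝ) ^ 2 * (x / (8 * π))
          = -(((2 * j + 1 : ℕ) : ℝ) ^ 2) * x / 8 := by
        field_simp
      rw [h8]
      push_cast
      ring
    push_cast
    push_cast at hexp
    linear_combination ((-1:ℝ) ^ j * (2 * (j:ℝ) + 1)) * hexp
  simp only [Function.comp_def] at h2
  rw [funext key] at h2
  have h4 := (hasSum_nat_add_iff' 1).mpr h2
  have hzero : ∑ i ∈ Finset.range 1,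
      (-1 : ℝ) ^ i * (2 * (i : ℝ) + 1) * Real.exp (-((i : ℝ) * ((i : ℝ) + 1) / 2) * x) = 1 := by
    simp
  rw [hzero] at h4
  have h5 := h4.neg
  rw [neg_sub] at h5
  refine h5.congr_fun fun k ↦ ?_
  show Pterm k x = _
  unfold Pterm cc
  push_cast
  rw [show -(((k:ℝ) + 1) * ((k:ℝ) + 2) / 2) * x = -(((k:ℝ)+1) * (((k:ℝ)+1) + 1) / 2) * x by ring]
  ring


def Kterm (n : ℤ) (y : ℝ) : ℝ := ((n : ℝ) + 4⁻¹) * Real.exp (-π * ((n : ℝ) + 4⁻¹) ^ 2 * y)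

def Kdterm (n : ℤ) (y : ℝ) : ℝ :=
  ((n : ℝ) + 4⁻¹) * (Real.exp (-π * ((n : ℝ) + 4⁻¹) ^ 2 * y) * (-π * ((n : ℝ) + 4⁻¹) ^ 2))

def Kfun (y : ℝ) : ℝ := ∑' n, Kterm n y

def Kd (y : ℝ) : ℝ := ∑' n, Kdterm n y

lemma norm_Kterm (n : ℤ) (y : ℝ) : ‖Kterm n y‖ = f_int 1 4⁻¹ y n := by
  unfold Kterm f_int
  rw [Real.norm_eq_abs, abs_mul, abs_of_pos (Real.exp_pos _), pow_one]

lemma norm_Kdterm (n : ℤ) (y : ℝ) : ‖Kdterm n y‖ = π * f_int 3 4⁻¹ y n := by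
  unfold Kdterm f_int
  have hπ := Real.pi_pos
  rw [Real.norm_eq_abs, abs_mul, abs_mul, abs_of_pos (Real.exp_pos _), abs_mul, abs_neg,
    abs_of_pos hπ, abs_sq]
  calc |(n:ℝ) + 4⁻¹| * (Real.exp (-π * ((n:ℝ) + 4⁻¹) ^ 2 * y) * (π * ((n:ℝ) + 4⁻¹) ^ 2))
      = π * (|(n:ℝ) + 4⁻¹| * |(n:ℝ) + 4⁻¹| ^ 2 * Real.exp (-π * ((n:ℝ) + 4⁻¹) ^ 2 * y)) := by
        rw [sq_abs]; ring
    _ = π * (|(n:ℝ) + 4⁻¹| ^ 3 * Real.exp (-π * ((n:ℝ) + 4⁻¹) ^ 2 * y)) := by ring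
 
lemma summable_Kterm {y : ℝ} (hy : 0 < y) : Summable fun n : ℤ ↦ Kterm n y := by
  refine Summable.of_norm ?_
  simpa only [norm_Kterm] using summable_f_int 1 4⁻¹ hy

lemma summable_Kdterm {y : ℝ} (hy : 0 < y) : Summable fun n : ℤ ↦ Kdterm n y := by
  refine Summable.of_norm ?_
  simpa only [norm_Kdterm] using (summable_f_int 3 4⁻¹ hy).mul_left π

lemma Kfun_eq_oddKernel {y : ℝ} (hy : 0 < y) : Kfun y = oddKernel (↑(4⁻¹ : ℝ)) y :=
  (hasSum_int_oddKernel 4⁻¹ hy).tsum_eq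

lemma sinKernel_eq {y : ℝ} (hy : 0 < y) :
    sinKernel (↑(4⁻¹ : ℝ)) (1 / y) = y ^ ((3:ℝ)/2) * Kfun y := by
  have h := oddKernel_functional_equation (↑(4⁻¹ : ℝ)) y
  rw [Kfun_eq_oddKernel hy, h]
  have hy32 : (0:ℝ) < y ^ ((3:ℝ)/2) := Real.rpow_pos_of_pos hy _
  field_simp

lemma hasDerivAt_Kfun {y₀ : ℝ} (hy₀ : 0 < y₀) : HasDerivAt Kfun (Kd y₀) y₀ := by
  have hu : Summable fun n : ℤ ↦ π * f_int 3 4⁻¹ (y₀ / 2) n :=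
    (summable_f_int 3 4⁻¹ (half_pos hy₀)).mul_left π
  refine hasDerivAt_tsum_of_isPreconnected hu isOpen_Ioi isPreconnected_Ioi
    (fun n y _ ↦ ?_) (fun n y hy ↦ ?_) (mem_Ioi.mpr (half_lt_self hy₀))
    (summable_Kterm hy₀) (mem_Ioi.mpr (half_lt_self hy₀))
  · have h1 : HasDerivAt (fun z : ℝ ↦ -π * ((n : ℝ) + 4⁻¹) ^ 2 * z)
        (-π * ((n : ℝ) + 4⁻¹) ^ 2) y := by
      have := (hasDerivAt_id y).const_mul (-π * ((n : ℝ) + 4⁻¹) ^ 2)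
      rwa [mul_one] at this
    exact (h1.exp).const_mul _
  · rw [norm_Kdterm]
    have hmono : Real.exp (-π * ((n:ℝ) + 4⁻¹) ^ 2 * y) ≤
        Real.exp (-π * ((n:ℝ) + 4⁻¹) ^ 2 * (y₀ / 2)) := by
      apply Real.exp_le_exp.mpr
      have h1 : 0 ≤ π * ((n:ℝ) + 4⁻¹) ^ 2 := by positivity
      nlinarith [mem_Ioi.mp hy]
    unfold f_int
    have h2 : (0:ℝ) ≤ |(n:ℝ) + 4⁻¹| ^ 3 := by positivity
    have hπ := Real.pi_pos
    calc π * (|(n:ℝ) + 4⁻¹| ^ 3 * Real.exp (-π * ((n:ℝ) + 4⁻¹) ^ 2 * y))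
        ≤ π * (|(n:ℝ) + 4⁻¹| ^ 3 * Real.exp (-π * ((n:ℝ) + 4⁻¹) ^ 2 * (y₀/2))) := by
          apply mul_le_mul_of_nonneg_left _ (le_of_lt hπ)
          exact mul_le_mul_of_nonneg_left hmono h2
      _ = π * f_int 3 4⁻¹ (y₀ / 2) n := rfl


lemma sixteenth_le (n : ℤ) : (1:ℝ)/16 ≤ ((n : ℝ) + 4⁻¹) ^ 2 := by
  rcases le_or_gt 0 n with h | h
  · have : (0:ℝ) ≤ n := by exact_mod_cast h
    nlinarith
  · have h' : n ≤ -1 := by omega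
    have : (n:ℝ) ≤ -1 := by exact_mod_cast h'
    nlinarith

lemma f_int_decay (k : ℕ) {y : ℝ} (hy : 1 ≤ y) (n : ℤ) :
    f_int k 4⁻¹ y n ≤ Real.exp (π/16) * Real.exp (-(π/16) * y) * f_int k 4⁻¹ 1 n := by
  unfold f_int
  have h1 : Real.exp (-π * ((n:ℝ) + 4⁻¹) ^ 2 * y)
      ≤ Real.exp (π/16) * Real.exp (-(π/16) * y) * Real.exp (-π * ((n:ℝ) + 4⁻¹) ^ 2 * 1) := by
    rw [← Real.exp_add, ← Real.exp_add]
    apply Real.exp_le_exp.mpr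
    have h2 := sixteenth_le n
    have hπ := Real.pi_pos
    nlinarith [mul_le_mul_of_nonneg_left (mul_le_mul_of_nonneg_right h2 (by linarith : (0:ℝ) ≤ y - 1)) hπ.le]
  have h3 : (0:ℝ) ≤ |(n:ℝ) + 4⁻¹| ^ k := by positivity
  calc |(n:ℝ) + 4⁻¹| ^ k * Real.exp (-π * ((n:ℝ) + 4⁻¹) ^ 2 * y)
      ≤ |(n:ℝ) + 4⁻¹| ^ k * (Real.exp (π/16) * Real.exp (-(π/16) * y) *
        Real.exp (-π * ((n:ℝ) + 4⁻¹) ^ 2 * 1)) := mul_le_mul_of_nonneg_left h1 h3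
    _ = Real.exp (π/16) * Real.exp (-(π/16) * y) *
        (|(n:ℝ) + 4⁻¹| ^ k * Real.exp (-π * ((n:ℝ) + 4⁻¹) ^ 2 * 1)) := by ring

def M1 : ℝ := ∑' n : ℤ, f_int 1 4⁻¹ 1 n

def M3 : ℝ := ∑' n : ℤ, f_int 3 4⁻¹ 1 n

/-- Common decay constant for `Kfun` and `Kd`. -/
def C0 : ℝ := Real.exp (π/16) * (M1 + π * M3)

lemma M1_nonneg : 0 ≤ M1 := tsum_nonneg fun n ↦ by unfold f_int; positivity

lemma M3_nonneg : 0 ≤ M3 := tsum_nonneg fun n ↦ by unfold f_int; positivity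

lemma Kfun_bound {y : ℝ} (hy : 1 ≤ y) : |Kfun y| ≤ C0 * Real.exp (-(π/16) * y) := by
  have hy0 : (0:ℝ) < y := lt_of_lt_of_le one_pos hy
  have hsum := summable_Kterm hy0
  have h1 : |Kfun y| ≤ ∑' n : ℤ, ‖Kterm n y‖ := by
    rw [← Real.norm_eq_abs]
    exact norm_tsum_le_tsum_norm hsum.norm
  have h2 : ∑' n : ℤ, ‖Kterm n y‖
      ≤ ∑' n : ℤ, Real.exp (π/16) * Real.exp (-(π/16) * y) * f_int 1 4⁻¹ 1 n := by
    apply Summable.tsum_le_tsum _ hsum.norm (((summable_f_int 1 4⁻¹ one_pos).mul_left _))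
    intro n
    rw [norm_Kterm]
    exact f_int_decay 1 hy n
  have h3 : ∑' n : ℤ, Real.exp (π/16) * Real.exp (-(π/16) * y) * f_int 1 4⁻¹ 1 n
      = Real.exp (π/16) * Real.exp (-(π/16) * y) * M1 := tsum_mul_left
  have hπ := Real.pi_pos
  have hM3 := M3_nonneg
  have hexps : (0:ℝ) < Real.exp (π/16) * Real.exp (-(π/16) * y) := by positivity
  calc |Kfun y| ≤ Real.exp (π/16) * Real.exp (-(π/16) * y) * M1 := by
        rw [← h3]; exact h1.trans h2
    _ ≤ Real.exp (π/16) * Real.exp (-(π/16) * y) * (M1 + π * M3) :=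
        mul_le_mul_of_nonneg_left (by nlinarith) hexps.le
    _ = C0 * Real.exp (-(π/16) * y) := by unfold C0; ring

lemma Kd_bound {y : ℝ} (hy : 1 ≤ y) : |Kd y| ≤ C0 * Real.exp (-(π/16) * y) := by
  have hy0 : (0:ℝ) < y := lt_of_lt_of_le one_pos hy
  have hsum := summable_Kdterm hy0
  have h1 : |Kd y| ≤ ∑' n : ℤ, ‖Kdterm n y‖ := by
    rw [← Real.norm_eq_abs]
    exact norm_tsum_le_tsum_norm hsum.norm
  have h2 : ∑' n : ℤ, ‖Kdterm n y‖
      ≤ ∑' n : ℤ, π * (Real.exp (π/16) * Real.exp (-(π/16) * y) * f_int 3 4⁻¹ 1 n) := by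
    apply Summable.tsum_le_tsum _ hsum.norm (((summable_f_int 3 4⁻¹ one_pos).mul_left _).mul_left π)
    intro n
    rw [norm_Kdterm]
    exact mul_le_mul_of_nonneg_left (f_int_decay 3 hy n) Real.pi_pos.le
  have h3 : ∑' n : ℤ, π * (Real.exp (π/16) * Real.exp (-(π/16) * y) * f_int 3 4⁻¹ 1 n)
      = π * (Real.exp (π/16) * Real.exp (-(π/16) * y) * M3) := by
    rw [tsum_mul_left, tsum_mul_left]
    rfl
  have hπ := Real.pi_pos
  have hM1 := M1_nonneg
  have hexps : (0:ℝ) < Real.exp (π/16) * Real.exp (-(π/16) * y) := by positivity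
  calc |Kd y| ≤ π * (Real.exp (π/16) * Real.exp (-(π/16) * y) * M3) := by
        rw [← h3]; exact h1.trans h2
    _ ≤ Real.exp (π/16) * Real.exp (-(π/16) * y) * (M1 + π * M3) := by
        nlinarith [mul_le_mul_of_nonneg_left
          (by nlinarith : π * M3 ≤ M1 + π * M3) hexps.le]
    _ = C0 * Real.exp (-(π/16) * y) := by unfold C0; ring


def Wfun (y : ℝ) : ℝ := y ^ ((3:ℝ)/2) * Kfun y

def Wd (y : ℝ) : ℝ := (3:ℝ)/2 * y ^ ((3:ℝ)/2 - 1) * Kfun y + y ^ ((3:ℝ)/2) * Kd y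

def Gfun (x : ℝ) : ℝ := 1 - 1 / 2 * (Real.exp (x / 8) * Wfun (8 * π / x))

def Efun (x : ℝ) : ℝ :=
  -(1 / 2 * (Real.exp (x / 8) * (1 / 8) * Wfun (8 * π / x) +
    Real.exp (x / 8) * (Wd (8 * π / x) * (-(8 * π) / x ^ 2))))

lemma hasDerivAt_Wfun {y : ℝ} (hy : 0 < y) : HasDerivAt Wfun (Wd y) y := by
  have h1 : HasDerivAt (fun z : ℝ ↦ z ^ ((3:ℝ)/2)) ((3:ℝ)/2 * y ^ ((3:ℝ)/2 - 1)) y := by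
    exact Real.hasDerivAt_rpow_const (x := y) (p := (3:ℝ)/2) (Or.inl hy.ne')
  exact h1.mul (hasDerivAt_Kfun hy)

lemma Pfun_eq_Gfun {x : ℝ} (hx : 0 < x) : Pfun x = Gfun x := by
  have hπ := Real.pi_pos
  have hy : 0 < 8 * π / x := by positivity
  have h1 := (hasSum_P hx).tsum_eq
  have h2 : x / (8 * π) = 1 / (8 * π / x) := by field_simp
  unfold Pfun
  rw [h1, h2, sinKernel_eq hy]
  unfold Gfun Wfun
  ring

lemma hasDerivAt_Gfun {x : ℝ} (hx : 0 < x) : HasDerivAt Gfun (Efun x) x := by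
  have hπ := Real.pi_pos
  have hy : 0 < 8 * π / x := by positivity
  have hinner : HasDerivAt (fun z : ℝ ↦ 8 * π / z) (-(8 * π) / x ^ 2) x := by
    have h0 := (hasDerivAt_inv hx.ne').const_mul (8 * π)
    have : (fun z : ℝ ↦ 8 * π * z⁻¹) = fun z : ℝ ↦ 8 * π / z := by
      funext z; rw [div_eq_mul_inv]
    rw [this] at h0
    exact h0.congr_deriv (by ring)
  have hW := (hasDerivAt_Wfun hy).comp x hinner
  have hexp : HasDerivAt (fun z : ℝ ↦ Real.exp (z / 8)) (Real.exp (x / 8) * (1 / 8)) x := by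
    have h1 : HasDerivAt (fun z : ℝ ↦ z / 8) (1 / 8 : ℝ) x := by
      simpa using (hasDerivAt_id x).div_const 8
    simpa using h1.exp
  have hfull := ((hexp.mul hW).const_mul (1 / 2 : ℝ)).const_sub 1
  exact hfull


lemma C0_nonneg : 0 ≤ C0 := by
  unfold C0
  have h1 := M1_nonneg
  have h2 := M3_nonneg
  have h3 := Real.pi_pos
  have : (0:ℝ) ≤ M1 + π * M3 := by nlinarith
  positivity

lemma exp_quarter {z : ℝ} (hz : 0 ≤ z) : z ^ 2 / 4 ≤ Real.exp z := by
  have h1 := Real.add_one_le_exp (z / 2)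
  have h2 : Real.exp (z / 2) * Real.exp (z / 2) = Real.exp z := by
    rw [← Real.exp_add]; ring_nf
  nlinarith [Real.exp_pos (z / 2)]

lemma y4_exp {y : ℝ} (hy : 1 ≤ y) : y ^ 4 * Real.exp (-(π / 16) * y) ≤ 16 * (32 / π) ^ 4 := by
  have hπ := Real.pi_pos
  have hy0 : (0:ℝ) < y := lt_of_lt_of_le one_pos hy
  have hz : (0:ℝ) ≤ π / 32 * y := by positivity
  have h1 := exp_quarter hz
  have h2 : Real.exp (π / 32 * y) * Real.exp (π / 32 * y) = Real.exp (π / 16 * y) := by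
    rw [← Real.exp_add]; ring_nf
  have h3 : (π / 32) ^ 4 * y ^ 4 / 16 ≤ Real.exp (π / 16 * y) := by
    have h4 := mul_le_mul h1 h1 (by positivity) (Real.exp_pos _).le
    nlinarith [h4, h2]
  have hpos := Real.exp_pos (π / 16 * y)
  have key : y ^ 4 ≤ 16 * (32 / π) ^ 4 * Real.exp (π / 16 * y) := by
    calc y ^ 4 = 16 * (32 / π) ^ 4 * ((π / 32) ^ 4 * y ^ 4 / 16) := by
          field_simp
      _ ≤ 16 * (32 / π) ^ 4 * Real.exp (π / 16 * y) :=
          mul_le_mul_of_nonneg_left h3 (by positivity)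
  have hrw : -(π / 16) * y = -(π / 16 * y) := by ring
  rw [hrw, Real.exp_neg]
  rw [mul_inv_le_iff₀ hpos]
  linarith [key]

/-- The final constant bounding `|Efun|` on `(0,1]`. -/
def Cbig : ℝ := 5 * C0 * (16 * (32 / π) ^ 4)

lemma Efun_bound {x : ℝ} (hx0 : 0 < x) (hx1 : x ≤ 1) : |Efun x| ≤ Cbig := by
  have hπ := Real.pi_pos
  have hπ3 := Real.pi_gt_three
  set y := 8 * π / x with hydef
  have hy0 : 0 < y := by positivity
  have hy1 : 1 ≤ y := by
    rw [hydef, le_div_iff₀ hx0]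
    nlinarith
  set E := Real.exp (-(π / 16) * y) with hEdef
  have hE : 0 < E := Real.exp_pos _
  have hC0 : 0 ≤ C0 := C0_nonneg
  have hCE : 0 ≤ C0 * E := by positivity
  have hK := Kfun_bound hy1
  have hKd := Kd_bound hy1
  have h2cast : y ^ ((2:ℕ):ℝ) = y ^ (2:ℕ) := Real.rpow_natCast y 2
  have h32 : y ^ ((3:ℝ)/2) ≤ y ^ 2 := by
    have h := Real.rpow_le_rpow_of_exponent_le hy1 (by norm_num : (3:ℝ)/2 ≤ ((2:ℕ):ℝ))
    rwa [h2cast] at h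
  have h12 : y ^ ((3:ℝ)/2 - 1) ≤ y ^ 2 := by
    have h := Real.rpow_le_rpow_of_exponent_le hy1 (by norm_num : (3:ℝ)/2 - 1 ≤ ((2:ℕ):ℝ))
    rwa [h2cast] at h
  have h32n : 0 ≤ y ^ ((3:ℝ)/2) := Real.rpow_nonneg hy0.le _
  have h12n : 0 ≤ y ^ ((3:ℝ)/2 - 1) := Real.rpow_nonneg hy0.le _
  have hW : |Wfun y| ≤ y ^ 2 * (C0 * E) := by
    unfold Wfun
    rw [abs_mul, abs_of_nonneg h32n]
    exact mul_le_mul h32 hK (abs_nonneg _) (by positivity)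
  have hWd : |Wd y| ≤ 3 * (y ^ 2 * (C0 * E)) := by
    unfold Wd
    refine (abs_add_le _ _).trans ?_
    have t1 : |(3:ℝ)/2 * y ^ ((3:ℝ)/2 - 1) * Kfun y| ≤ 3/2 * (y ^ 2 * (C0 * E)) := by
      rw [abs_mul, abs_mul, abs_of_nonneg (by norm_num : (0:ℝ) ≤ 3/2),
        abs_of_nonneg h12n, mul_assoc]
      have h := mul_le_mul h12 hK (abs_nonneg _) (by positivity)
      nlinarith [h]
    have t2 : |y ^ ((3:ℝ)/2) * Kd y| ≤ y ^ 2 * (C0 * E) := by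
      rw [abs_mul, abs_of_nonneg h32n]
      exact mul_le_mul h32 hKd (abs_nonneg _) (by positivity)
    nlinarith [t1, t2]
  have hexp3 : Real.exp (x / 8) ≤ 3 := by
    have h1 : Real.exp (x / 8) ≤ Real.exp 1 := Real.exp_le_exp.mpr (by linarith)
    have h2 := Real.exp_one_lt_d9
    linarith
  have habs8 : |(-(8 * π) / x ^ 2)| = 8 * π / x ^ 2 := by
    rw [abs_div, abs_neg, abs_of_pos (by positivity : (0:ℝ) < 8 * π),
      abs_of_pos (by positivity : (0:ℝ) < x ^ 2)]
  have hx2 : 8 * π / x ^ 2 = y ^ 2 / (8 * π) := by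
    rw [hydef]
    field_simp
  have hy2div : y ^ 2 / (8 * π) ≤ y ^ 2 := by
    apply div_le_self (by positivity)
    nlinarith
  have e1 : |Efun x| ≤ 1/2 * (Real.exp (x/8) * (1/8) * |Wfun y| +
      Real.exp (x/8) * (|Wd y| * (y ^ 2 / (8 * π)))) := by
    unfold Efun
    rw [abs_neg, abs_mul, abs_of_nonneg (by norm_num : (0:ℝ) ≤ 1/2)]
    apply mul_le_mul_of_nonneg_left _ (by norm_num)
    refine (abs_add_le _ _).trans ?_
    apply add_le_add
    · rw [abs_mul, abs_mul, abs_of_pos (Real.exp_pos _),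
        abs_of_nonneg (by norm_num : (0:ℝ) ≤ 1/8)]
    · rw [abs_mul, abs_of_pos (Real.exp_pos _), abs_mul, habs8, hx2]
  have e2 : 1/2 * (Real.exp (x/8) * (1/8) * |Wfun y| +
      Real.exp (x/8) * (|Wd y| * (y ^ 2 / (8 * π))))
      ≤ 1/2 * (3 * (1/8) * (y ^ 2 * (C0 * E)) + 3 * ((3 * (y ^ 2 * (C0 * E))) * y ^ 2)) := by
    have hWabs : 0 ≤ |Wfun y| := abs_nonneg _
    have hWdabs : 0 ≤ |Wd y| := abs_nonneg _
    have hexp0 : 0 < Real.exp (x/8) := Real.exp_pos _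
    gcongr <;> first
      | exact hexp3
      | exact hW
      | exact hWd
      | exact hy2div
  have hy24 : y ^ 2 ≤ y ^ 4 := pow_le_pow_right₀ hy1 (by norm_num)
  have e3 : 1/2 * (3 * (1/8) * (y ^ 2 * (C0 * E)) + 3 * ((3 * (y ^ 2 * (C0 * E))) * y ^ 2))
      ≤ 5 * C0 * (y ^ 4 * E) := by
    have hb : 3 * ((3 * (y ^ 2 * (C0 * E))) * y ^ 2) = 9 * (y ^ 4 * (C0 * E)) := by ring
    have ha_le : y ^ 2 * (C0 * E) ≤ y ^ 4 * (C0 * E) := mul_le_mul_of_nonneg_right hy24 hCE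
    rw [hb]
    have hrhs : 5 * C0 * (y ^ 4 * E) = 5 * (y ^ 4 * (C0 * E)) := by ring
    rw [hrhs]
    have hbpos : (0:ℝ) ≤ y ^ 4 * (C0 * E) := by positivity
    linarith [ha_le]
  have e4 : 5 * C0 * (y ^ 4 * E) ≤ Cbig := by
    unfold Cbig
    exact mul_le_mul_of_nonneg_left (y4_exp hy1) (by positivity)
  linarith [e1, e2, e3, e4]


lemma summable_aux (m : ℕ) {y : ℝ} (hy : 0 < y) :
    Summable (fun k : ℕ ↦ ((k:ℝ) + 3) ^ m * Real.exp (-(cc k) * y)) := by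
  have h0 : Summable (fun n : ℕ ↦ (n:ℝ) ^ m * Real.exp (-y * n)) :=
    Real.summable_pow_mul_exp_neg_nat_mul m hy
  have h1 : Summable (fun k : ℕ ↦ (((k + 3 : ℕ)):ℝ) ^ m * Real.exp (-y * ((k + 3 : ℕ) : ℝ))) :=
    h0.comp_injective (add_left_injective 3)
  have h2 := h1.mul_left (Real.exp (3 * y))
  apply Summable.of_nonneg_of_le (fun k ↦ by positivity) _ h2
  intro k
  have hcast : (((k + 3 : ℕ)):ℝ) = (k:ℝ) + 3 := by push_cast; ring
  rw [hcast]
  have hexp : Real.exp (-(cc k) * y) ≤ Real.exp (3 * y) * Real.exp (-y * ((k:ℝ) + 3)) := by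
    rw [← Real.exp_add]
    apply Real.exp_le_exp.mpr
    have := nat_le_cc k
    nlinarith
  calc ((k:ℝ) + 3) ^ m * Real.exp (-(cc k) * y)
      ≤ ((k:ℝ) + 3) ^ m * (Real.exp (3 * y) * Real.exp (-y * ((k:ℝ) + 3))) :=
        mul_le_mul_of_nonneg_left hexp (by positivity)
    _ = Real.exp (3 * y) * (((k:ℝ) + 3) ^ m * Real.exp (-y * ((k:ℝ) + 3))) := by ring

lemma norm_Dterm (k : ℕ) (x : ℝ) :
    ‖Dterm k x‖ = (2 * (k:ℝ) + 3) * cc k * Real.exp (-(cc k) * x) := by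
  unfold Dterm
  have h1 : (0:ℝ) < (2 * (k:ℝ) + 3) * cc k := by
    have := cc_pos k
    have : (0:ℝ) ≤ k := Nat.cast_nonneg k
    have := cc_pos k
    nlinarith
  rw [Real.norm_eq_abs, abs_mul, abs_mul, abs_pow, abs_neg, abs_one, one_pow, one_mul,
    abs_of_pos h1, abs_of_pos (Real.exp_pos _)]

lemma Dterm_le (k : ℕ) {c y : ℝ} (h : c ≤ y) :
    ‖Dterm k y‖ ≤ ((k:ℝ) + 3) ^ 3 * Real.exp (-(cc k) * c) := by
  rw [norm_Dterm]
  have hk : (0:ℝ) ≤ k := Nat.cast_nonneg k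
  have hcoef : (2 * (k:ℝ) + 3) * cc k ≤ ((k:ℝ) + 3) ^ 3 := by
    unfold cc; nlinarith
  have hexp : Real.exp (-(cc k) * y) ≤ Real.exp (-(cc k) * c) := by
    apply Real.exp_le_exp.mpr
    have := cc_pos k
    nlinarith
  have h1 : (0:ℝ) ≤ (2 * (k:ℝ) + 3) * cc k := by
    have := cc_pos k; nlinarith
  calc (2 * (k:ℝ) + 3) * cc k * Real.exp (-(cc k) * y)
      ≤ (2 * (k:ℝ) + 3) * cc k * Real.exp (-(cc k) * c) :=
        mul_le_mul_of_nonneg_left hexp h1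
    _ ≤ ((k:ℝ) + 3) ^ 3 * Real.exp (-(cc k) * c) :=
        mul_le_mul_of_nonneg_right hcoef (Real.exp_pos _).le

lemma hasDerivAt_Pfun {x : ℝ} (hx : 0 < x) : HasDerivAt Pfun (-(Dfun x)) x := by
  have hu : Summable (fun k : ℕ ↦ ((k:ℝ) + 3) ^ 3 * Real.exp (-(cc k) * (x / 2))) :=
    summable_aux 3 (half_pos hx)
  have key := hasDerivAt_tsum_of_isPreconnected hu isOpen_Ioi isPreconnected_Ioi
    (g := fun k y ↦ Pterm k y) (g' := fun k y ↦ -(Dterm k y))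
    (fun k y _ ↦ ?_) (fun k y hy ↦ ?_) (mem_Ioi.mpr (half_lt_self hx))
    ((hasSum_P hx).summable) (mem_Ioi.mpr (half_lt_self hx))
  · have h2 : (∑' k, -(Dterm k x)) = -(Dfun x) := by
      rw [tsum_neg]; rfl
    rw [h2] at key
    exact key
  · have h1 : HasDerivAt (fun z : ℝ ↦ -(cc k) * z) (-(cc k)) y := by
      have := (hasDerivAt_id y).const_mul (-(cc k))
      rwa [mul_one] at this
    have h2 := (h1.exp).const_mul ((-1:ℝ) ^ k * (2 * (k:ℝ) + 3))
    refine h2.congr_deriv ?_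
    unfold Dterm
    ring
  · rw [norm_neg]
    exact Dterm_le k (le_of_lt (mem_Ioi.mp hy))

def N3 : ℝ := ∑' k : ℕ, ((k:ℝ) + 3) ^ 3 * Real.exp (-(cc k) * 1)

lemma N3_nonneg : 0 ≤ N3 := tsum_nonneg fun k ↦ by positivity

lemma summable_normD {x : ℝ} (hx : 0 < x) : Summable fun k ↦ ‖Dterm k x‖ :=
  Summable.of_nonneg_of_le (fun k ↦ norm_nonneg _) (fun k ↦ Dterm_le k le_rfl)
    (summable_aux 3 hx)

lemma Dfun_tail {x : ℝ} (hx : 1 ≤ x) : ‖Dfun x‖ ≤ N3 * Real.exp 1 * Real.exp (-x) := by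
  have hx0 : 0 < x := lt_of_lt_of_le one_pos hx
  have h1 : ‖Dfun x‖ ≤ ∑' k, ‖Dterm k x‖ := norm_tsum_le_tsum_norm (summable_normD hx0)
  have hterm : ∀ k : ℕ, ‖Dterm k x‖
      ≤ ((k:ℝ) + 3) ^ 3 * Real.exp (-(cc k) * 1) * (Real.exp 1 * Real.exp (-x)) := by
    intro k
    refine (Dterm_le k le_rfl).trans ?_
    rw [mul_assoc, ← Real.exp_add, ← Real.exp_add]
    apply mul_le_mul_of_nonneg_left _ (by positivity)
    apply Real.exp_le_exp.mpr
    have := one_le_cc k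
    nlinarith
  have h2 : (∑' k, ‖Dterm k x‖)
      ≤ ∑' k : ℕ, ((k:ℝ) + 3) ^ 3 * Real.exp (-(cc k) * 1) * (Real.exp 1 * Real.exp (-x)) := by
    exact Summable.tsum_le_tsum hterm (summable_normD hx0) ((summable_aux 3 one_pos).mul_right _)
  have h3 : (∑' k : ℕ, ((k:ℝ) + 3) ^ 3 * Real.exp (-(cc k) * 1) * (Real.exp 1 * Real.exp (-x)))
      = N3 * (Real.exp 1 * Real.exp (-x)) := tsum_mul_right
  calc ‖Dfun x‖ ≤ N3 * (Real.exp 1 * Real.exp (-x)) := by rw [← h3]; exact h1.trans h2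
    _ = N3 * Real.exp 1 * Real.exp (-x) := by ring

lemma norm_Pterm (k : ℕ) (x : ℝ) :
    ‖Pterm k x‖ = (2 * (k:ℝ) + 3) * Real.exp (-(cc k) * x) := by
  unfold Pterm
  have h1 : (0:ℝ) < 2 * (k:ℝ) + 3 := by
    have : (0:ℝ) ≤ k := Nat.cast_nonneg k; nlinarith
  rw [Real.norm_eq_abs, abs_mul, abs_mul, abs_pow, abs_neg, abs_one, one_pow, one_mul,
    abs_of_pos h1, abs_of_pos (Real.exp_pos _)]

lemma Pterm_le (k : ℕ) {c y : ℝ} (h : c ≤ y) :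
    ‖Pterm k y‖ ≤ ((k:ℝ) + 3) ^ 3 * Real.exp (-(cc k) * c) := by
  refine le_trans ?_ (Dterm_le k h)
  rw [norm_Pterm, norm_Dterm]
  have hk : (0:ℝ) ≤ k := Nat.cast_nonneg k
  have h1 := one_le_cc k
  have h2 : (2 * (k:ℝ) + 3) ≤ (2 * (k:ℝ) + 3) * cc k := by nlinarith
  exact mul_le_mul_of_nonneg_right h2 (Real.exp_pos _).le

lemma Pfun_tail {x : ℝ} (hx : 1 ≤ x) : ‖Pfun x‖ ≤ N3 * Real.exp 1 * Real.exp (-x) := by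
  have hx0 : 0 < x := lt_of_lt_of_le one_pos hx
  have hsum : Summable fun k ↦ ‖Pterm k x‖ :=
    Summable.of_nonneg_of_le (fun k ↦ norm_nonneg _) (fun k ↦ Pterm_le k le_rfl)
      (summable_aux 3 hx0)
  have h1 : ‖Pfun x‖ ≤ ∑' k, ‖Pterm k x‖ := norm_tsum_le_tsum_norm hsum
  have hterm : ∀ k : ℕ, ‖Pterm k x‖
      ≤ ((k:ℝ) + 3) ^ 3 * Real.exp (-(cc k) * 1) * (Real.exp 1 * Real.exp (-x)) := by
    intro k
    refine (Pterm_le k le_rfl).trans ?_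
    rw [mul_assoc, ← Real.exp_add, ← Real.exp_add]
    apply mul_le_mul_of_nonneg_left _ (by positivity)
    apply Real.exp_le_exp.mpr
    have := one_le_cc k
    nlinarith
  have h2 : (∑' k, ‖Pterm k x‖)
      ≤ ∑' k : ℕ, ((k:ℝ) + 3) ^ 3 * Real.exp (-(cc k) * 1) * (Real.exp 1 * Real.exp (-x)) :=
    Summable.tsum_le_tsum hterm hsum ((summable_aux 3 one_pos).mul_right _)
  have h3 : (∑' k : ℕ, ((k:ℝ) + 3) ^ 3 * Real.exp (-(cc k) * 1) * (Real.exp 1 * Real.exp (-x)))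
      = N3 * (Real.exp 1 * Real.exp (-x)) := tsum_mul_right
  calc ‖Pfun x‖ ≤ N3 * (Real.exp 1 * Real.exp (-x)) := by rw [← h3]; exact h1.trans h2
    _ = N3 * Real.exp 1 * Real.exp (-x) := by ring

lemma continuousOn_Dfun : ContinuousOn Dfun (Ioi (0:ℝ)) := by
  intro x hx
  have hx0 : (0:ℝ) < x := hx
  have h : ContinuousOn (fun y : ℝ ↦ ∑' k : ℕ, Dterm k y) (Ioi (x/2)) := by
    refine continuousOn_tsum (f := fun (k : ℕ) (y : ℝ) ↦ Dterm k y)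
      (u := fun k : ℕ ↦ ((k:ℝ) + 3) ^ 3 * Real.exp (-(cc k) * (x/2)))
      (fun k ↦ Continuous.continuousOn (by unfold Dterm; fun_prop))
      (summable_aux 3 (half_pos hx0)) ?_
    intro k y hy
    exact Dterm_le k (le_of_lt (mem_Ioi.mp hy))
  exact (h.continuousAt (Ioi_mem_nhds (half_lt_self hx0))).continuousWithinAt


lemma Dfun_eq_negEfun {x : ℝ} (hx : 0 < x) : Dfun x = -(Efun x) := by
  have hev : Pfun =ᶠ[𝓝 x] Gfun := by
    filter_upwards [Ioi_mem_nhds hx] with y hy using Pfun_eq_Gfun hy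
  have h1 : HasDerivAt Gfun (-(Dfun x)) x :=
    (hasDerivAt_Pfun hx).congr_of_eventuallyEq hev.symm
  have h2 := (hasDerivAt_Gfun hx).unique h1
  linarith [h2]

/-- The antiderivative, extended by its limit `-1` at `0`. -/
def Phi (x : ℝ) : ℝ := if x ≤ 0 then (-1 : ℝ) else -(Pfun x)

lemma Phi_deriv {x : ℝ} (hx : 0 < x) : HasDerivAt Phi (Dfun x) x := by
  have h1 := (hasDerivAt_Pfun hx).neg
  rw [neg_neg] at h1
  apply h1.congr_of_eventuallyEq
  filter_upwards [Ioi_mem_nhds hx] with y hy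
  simp [Phi, not_le.mpr (mem_Ioi.mp hy)]

lemma Phi_top : Tendsto Phi atTop (𝓝 0) := by
  have h1 : Tendsto (fun x : ℝ ↦ N3 * Real.exp 1 * Real.exp (-x)) atTop (𝓝 0) := by
    have := Real.tendsto_exp_neg_atTop_nhds_zero.const_mul (N3 * Real.exp 1)
    simpa using this
  apply squeeze_zero_norm' _ h1
  filter_upwards [eventually_ge_atTop (1:ℝ)] with x hx
  have hx0 : ¬ x ≤ 0 := by linarith
  rw [Phi, if_neg hx0, norm_neg]
  exact Pfun_tail hx

lemma W_comp_tendsto : Tendsto (fun x : ℝ ↦ Wfun (8 * π / x)) (𝓝[>] 0) (𝓝 0) := by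
  have hπ := Real.pi_pos
  have B1 : Tendsto (fun x : ℝ ↦ 8 * π / x) (𝓝[>] (0:ℝ)) atTop := by
    simp only [div_eq_mul_inv]
    exact Tendsto.const_mul_atTop (by positivity) tendsto_inv_nhdsGT_zero
  have base := tendsto_pow_mul_exp_neg_atTop_nhds_zero 2
  have lin : Tendsto (fun y : ℝ ↦ π / 16 * y) atTop atTop :=
    Tendsto.const_mul_atTop (by positivity) tendsto_id
  have comp := base.comp lin
  have B2' : Tendsto (fun y : ℝ ↦ C0 * ((16/π)^2 * ((π / 16 * y) ^ 2 * Real.exp (-(π / 16 * y)))))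
      atTop (𝓝 0) := by
    have := (comp.const_mul ((16/π)^2)).const_mul C0
    simpa using this
  have B2 : Tendsto Wfun atTop (𝓝 0) := by
    apply squeeze_zero_norm' _ B2'
    filter_upwards [eventually_ge_atTop (1:ℝ)] with y hy
    have hy0 : (0:ℝ) < y := lt_of_lt_of_le one_pos hy
    have h2cast : y ^ ((2:ℕ):ℝ) = y ^ (2:ℕ) := Real.rpow_natCast y 2
    have h32 : y ^ ((3:ℝ)/2) ≤ y ^ 2 := by
      have h := Real.rpow_le_rpow_of_exponent_le hy (by norm_num : (3:ℝ)/2 ≤ ((2:ℕ):ℝ))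
      rwa [h2cast] at h
    have h32n : 0 ≤ y ^ ((3:ℝ)/2) := Real.rpow_nonneg hy0.le _
    have hK := Kfun_bound hy
    have hW : ‖Wfun y‖ ≤ y ^ 2 * (C0 * Real.exp (-(π/16) * y)) := by
      rw [Wfun, Real.norm_eq_abs, abs_mul, abs_of_nonneg h32n]
      exact mul_le_mul h32 hK (abs_nonneg _) (by positivity)
    refine hW.trans (le_of_eq ?_)
    have hπ' : π ≠ 0 := Real.pi_ne_zero
    field_simp
  exact B2.comp B1

lemma Phi_cont : ContinuousWithinAt Phi (Ici (0:ℝ)) 0 := by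
  rw [← Set.Ioi_insert, continuousWithinAt_insert_self]
  have hΦ0 : Phi 0 = -1 := by simp [Phi]
  unfold ContinuousWithinAt
  rw [hΦ0]
  have hA : Tendsto (fun x : ℝ ↦ Real.exp (x / 8)) (𝓝[>] 0) (𝓝 1) := by
    have h := (Real.continuous_exp.comp (continuous_id.div_const 8)).tendsto 0
    simp only [Function.comp_def, id_eq] at h
    norm_num at h
    exact h.mono_left nhdsWithin_le_nhds
  have hB := W_comp_tendsto
  have hG : Tendsto Gfun (𝓝[>] 0) (𝓝 1) := by
    have h := tendsto_const_nhds (α := ℝ) (x := (1:ℝ)) (f := 𝓝[>] (0:ℝ)).sub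
      (((hA.mul hB).const_mul (1/2 : ℝ)))
    unfold Gfun
    convert h using 2
    norm_num
  have hGneg : Tendsto (fun x ↦ -(Gfun x)) (𝓝[>] 0) (𝓝 (-1)) := hG.neg
  apply hGneg.congr'
  filter_upwards [self_mem_nhdsWithin] with y hy
  have hy0 : (0:ℝ) < y := hy
  rw [Phi, if_neg (not_le.mpr hy0), Pfun_eq_Gfun hy0]

lemma integrableOn_Dfun : IntegrableOn Dfun (Ioi (0:ℝ)) := by
  rw [← Ioc_union_Ioi_eq_Ioi (zero_le_one (α := ℝ))]
  apply IntegrableOn.union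
  · apply Integrable.mono' (g := fun _ ↦ Cbig)
    · exact integrableOn_const measure_Ioc_lt_top.ne
    · exact (continuousOn_Dfun.mono Ioc_subset_Ioi_self).aestronglyMeasurable measurableSet_Ioc
    · rw [ae_restrict_iff' measurableSet_Ioc]
      apply ae_of_all
      intro x hx
      rw [Real.norm_eq_abs, Dfun_eq_negEfun hx.1, abs_neg]
      exact Efun_bound hx.1 hx.2
  · apply Integrable.mono' (g := fun x ↦ N3 * Real.exp 1 * Real.exp (-x))
    · have h := (exp_neg_integrableOn_Ioi (1:ℝ) one_pos).const_mul (N3 * Real.exp 1)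
      simpa [neg_one_mul] using h
    · exact (continuousOn_Dfun.mono (Ioi_subset_Ioi zero_le_one)).aestronglyMeasurable
        measurableSet_Ioi
    · rw [ae_restrict_iff' measurableSet_Ioi]
      apply ae_of_all
      intro x hx
      exact Dfun_tail (le_of_lt (mem_Ioi.mp hx))

lemma integral_Dfun : ∫ x in Ioi (0:ℝ), Dfun x = 1 := by
  have h := integral_Ioi_of_hasDerivAt_of_tendsto (f := Phi) (f' := Dfun) (a := 0) (m := 0)
    Phi_cont (fun x hx ↦ Phi_deriv (mem_Ioi.mp hx)) integrableOn_Dfun Phi_top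
  rw [h]
  simp [Phi]


lemma integrand_eq (x : ℝ) :
    (∑' k : ℕ, (-1 : ℝ) ^ (k + 2) * Real.exp (-(((k + 2).choose 2 : ℝ)) * x) *
        ((k + 2).choose 2 : ℝ) * (2 * ((k : ℝ) + 2) - 1)) = Dfun x := by
  unfold Dfun
  apply tsum_congr
  intro k
  have hch : (((k + 2).choose 2 : ℕ) : ℝ) = cc k := by
    rw [Nat.cast_choose_two]
    unfold cc
    push_cast
    ring
  rw [hch]
  unfold Dterm
  rw [pow_add]
  push_cast
  ring

end Stmt10Aux

open Stmt10Aux in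
/-- `f(x) = ∑_{k=2}^∞ (-1)^k e^{-C(k,2)x} C(k,2)(2k-1)` is a probability density on `(0,∞)`:
its integral over `(0,∞)` equals `1`. -/
theorem stmt10 :
    ∫ x in Set.Ioi (0 : ℝ),
        (∑' k : ℕ, (-1 : ℝ) ^ (k + 2) * Real.exp (-(((k + 2).choose 2 : ℝ)) * x) *
          ((k + 2).choose 2 : ℝ) * (2 * ((k : ℝ) + 2) - 1)) = 1 := by
  simp_rw [integrand_eq]
  exact integral_Dfun
end
end

section
/- Fix a real number t and integers 2 ≤ m with m⁴ = o(n). Then (1 − λ_m)e^{it/n} / (1 − λ_m e^{it/n}) = (C(m,2)/(C(m,2) − it)) · (1 + O(m⁴/n)) as n → ∞, where λ_m = ∏_{j=1}^{m-1}(1 − j/n). -/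
lemma prod_one_sub_bounds (s : Finset ℕ) (f : ℕ → ℝ)
    (h0 : ∀ i ∈ s, 0 ≤ f i) (h1 : ∀ i ∈ s, f i ≤ 1) :
    1 - ∑ i ∈ s, f i ≤ ∏ i ∈ s, (1 - f i) ∧
      ∏ i ∈ s, (1 - f i) ≤ 1 - ∑ i ∈ s, f i + (∑ i ∈ s, f i) ^ 2 / 2 := by
  induction s using Finset.induction_on with
  | empty => simp
  | @insert a s ha ih =>
    have h0a := h0 a (Finset.mem_insert_self a s)
    have h1a := h1 a (Finset.mem_insert_self a s)
    obtain ⟨l, u⟩ := ih (fun i hi => h0 i (Finset.mem_insert_of_mem hi))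
      (fun i hi => h1 i (Finset.mem_insert_of_mem hi))
    have hS : 0 ≤ ∑ i ∈ s, f i :=
      Finset.sum_nonneg fun i hi => h0 i (Finset.mem_insert_of_mem hi)
    rw [Finset.sum_insert ha, Finset.prod_insert ha]
    constructor
    · nlinarith [mul_le_mul_of_nonneg_left l (by linarith : (0:ℝ) ≤ 1 - f a)]
    · nlinarith [mul_le_mul_of_nonneg_left u (by linarith : (0:ℝ) ≤ 1 - f a),
        sq_nonneg (f a), mul_nonneg h0a (sq_nonneg (∑ i ∈ s, f i))]

lemma sum_Icc_id_choose (m : ℕ) : ∑ j ∈ Finset.Icc 1 (m-1), j = m.choose 2 := by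
  have h1 : Finset.Icc 1 (m-1) = Finset.Ico 1 m := by
    rcases m with _ | m
    · simp
    · rw [← Finset.Ico_add_one_right_eq_Icc]; norm_num
  have h3 : ∑ j ∈ Finset.Ico 0 m, j = ∑ j ∈ Finset.Ico 0 1, j + ∑ j ∈ Finset.Ico 1 m, j := by
    rcases Nat.eq_zero_or_pos m with h | h
    · subst h; simp
    · exact (Finset.sum_Ico_consecutive _ (by omega) (by omega)).symm
  rw [← Finset.range_eq_Ico, Finset.sum_range_id] at h3
  rw [h1, Nat.choose_two_right]
  simp at h3
  omega

lemma arith_u (s u : ℝ) (h1 : 0 < s) (h2 : s ≤ 1/32) (h3 : s - s^2/2 ≤ u) : s/2 ≤ u := by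
  nlinarith

lemma arith_N (T s d X : ℝ) (hT : 0 ≤ T) (hs : 0 < s) (hd : 0 < d) (hds : d ≤ s)
    (hX : X ≤ (T * d) * (s^2/2 + s*(2 * T * d)) + s * ((T * d)^2)) :
    X ≤ (T/2 + 3*T^2) * s^2 * d := by
  nlinarith [mul_le_mul_of_nonneg_left hds (by positivity : (0:ℝ) ≤ T^2*s*d)]

lemma arith_C (T : ℝ) (hT : 0 ≤ T) : 4 * (T/2 + 3*T^2) ≤ 16 * (1 + T)^2 := by
  nlinarith

lemma key_identity (Lr : ℝ) (z cc nn tt : ℂ) (hn : nn ≠ 0) (hc : cc ≠ 0)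
    (hw : cc - Complex.I * tt ≠ 0) (hB : 1 - (Lr:ℂ) * z ≠ 0) :
    ((1 - (Lr:ℂ)) * z) / (1 - (Lr:ℂ) * z) =
      (cc / (cc - Complex.I * tt)) *
        (1 + ((1 - (Lr:ℂ)) * z * (cc/nn - Complex.I * tt / nn) -
            (cc/nn) * (1 - (Lr:ℂ) * z)) / ((cc/nn) * (1 - (Lr:ℂ) * z))) := by
  field_simp
  ring

set_option maxHeartbeats 1000000 in
/-- For fixed real `t`, uniformly in `m` with `m⁴` small compared to `n`,
`(1-λ_m)e^{it/n}/(1-λ_m e^{it/n}) = (C(m,2)/(C(m,2)-it))·(1 + O(m⁴/n))`,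
where `λ_m = ∏_{j=1}^{m-1}(1-j/n)`; the implied constant depends only on `t`. -/
theorem stmt13 (t : ℝ) :
    ∃ K : ℝ, 0 < K ∧ ∀ n m : ℕ, 2 ≤ m → 2 * K * (m : ℝ) ^ 4 ≤ (n : ℝ) →
      ∃ E : ℂ,
        ((1 - (∏ j ∈ Finset.Icc 1 (m - 1), (1 - (j : ℂ) / n))) *
            Complex.exp (Complex.I * t / n)) /
          (1 - (∏ j ∈ Finset.Icc 1 (m - 1), (1 - (j : ℂ) / n)) *
            Complex.exp (Complex.I * t / n)) =
          ((m.choose 2 : ℂ) / ((m.choose 2 : ℂ) - Complex.I * t)) * (1 + E) ∧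
        ‖E‖ ≤ K * (m : ℝ) ^ 4 / n := by
  have habs : 0 ≤ |t| := abs_nonneg t
  refine ⟨16 * (1 + |t|)^2, by positivity, ?_⟩
  intro n m hm hn
  set K : ℝ := 16 * (1 + |t|)^2 with hKdef
  have hK16 : 16 ≤ K := by nlinarith
  have hKt : |t| ≤ K := by nlinarith
  have hKt2 : |t|^2 ≤ K := by nlinarith [habs]
  have hm2 : (2:ℝ) ≤ (m:ℝ) := by exact_mod_cast hm
  have hm4 : (16:ℝ) ≤ (m:ℝ)^4 := by
    have := pow_le_pow_left₀ (by norm_num : (0:ℝ) ≤ 2) hm2 4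
    norm_num at this; linarith
  have hm1le : (1:ℝ) ≤ (m:ℝ)^4 := by linarith
  have hn32K : 32 * K ≤ (n:ℝ) := by
    nlinarith [mul_nonneg (by linarith : (0:ℝ) ≤ 2*K) (by linarith : (0:ℝ) ≤ (m:ℝ)^4 - 16)]
  have hn0 : (0:ℝ) < n := by linarith
  have hnt : 32 * |t| ≤ (n:ℝ) := by linarith [hKt]
  have hnt2 : 32 * |t|^2 ≤ (n:ℝ) := by linarith [hKt2]
  have htn1 : |t| / n ≤ 1 := by rw [div_le_one hn0]; linarith
  have hm_m4 : (m:ℝ) ≤ (m:ℝ)^4 := by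
    have h := pow_le_pow_right₀ (by linarith : (1:ℝ) ≤ (m:ℝ)) (by norm_num : 1 ≤ 4)
    simpa using h
  have hmn : (m:ℝ) ≤ (n:ℝ) := by
    linarith [mul_nonneg (by linarith : (0:ℝ) ≤ 2*K-1) (by positivity : (0:ℝ) ≤ (m:ℝ)^4), hm_m4, hn]
  -- the real quantities
  set c : ℝ := (m.choose 2 : ℝ) with hcdef
  have hc1 : 1 ≤ c := by
    rw [hcdef]
    have : 0 < m.choose 2 := Nat.choose_pos hm
    exact_mod_cast this
  have hcm : c ≤ (m:ℝ)^4 := by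
    have h1 : m.choose 2 ≤ m^2 := Nat.choose_le_pow m 2
    have h2 : (m:ℝ)^2 ≤ (m:ℝ)^4 :=
      pow_le_pow_right₀ (by linarith : (1:ℝ) ≤ (m:ℝ)) (by norm_num)
    have h3 : c ≤ (m:ℝ)^2 := by rw [hcdef]; exact_mod_cast h1
    linarith
  set s : ℝ := c / n with hsdef
  have hs0 : 0 < s := by rw [hsdef]; positivity
  have hs_lb : 1/n ≤ s := by rw [hsdef]; gcongr
  have hs_ub : s ≤ (m:ℝ)^4 / n := by rw [hsdef]; gcongr
  have hs_small : s ≤ 1 / (2*K) := by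
    rw [hsdef, div_le_div_iff₀ hn0 (by positivity)]
    linarith [mul_le_mul_of_nonneg_left hcm (by positivity : (0:ℝ) ≤ 2*K), hn]
  have hs1 : s ≤ 1/32 := by
    have h : 1/(2*K) ≤ 1/32 := by
      apply one_div_le_one_div_of_le <;> linarith
    linarith
  -- the sum over Icc
  have hsum : ∑ j ∈ Finset.Icc 1 (m-1), ((j:ℝ)/n) = s := by
    rw [← Finset.sum_div, hsdef]
    congr 1
    rw [hcdef, ← sum_Icc_id_choose m]
    exact (Nat.cast_sum _ _).symm
  -- the real product and its bounds
  set L : ℝ := ∏ j ∈ Finset.Icc 1 (m-1), (1 - (j:ℝ)/n) with hLdef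
  have hjn : ∀ j ∈ Finset.Icc 1 (m-1), (0:ℝ) ≤ (j:ℝ)/n ∧ (j:ℝ)/n ≤ 1 := by
    intro j hj
    rw [Finset.mem_Icc] at hj
    have hjm : (j:ℝ) ≤ (m:ℝ) := by
      have : j ≤ m := by omega
      exact_mod_cast this
    constructor
    · positivity
    · rw [div_le_one hn0]; linarith
  obtain ⟨hL1, hL2⟩ := prod_one_sub_bounds (Finset.Icc 1 (m-1)) (fun j => (j:ℝ)/n)
    (fun i hi => (hjn i hi).1) (fun i hi => (hjn i hi).2)
  simp only [hsum] at hL1 hL2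
  rw [← hLdef] at hL1 hL2
  set u : ℝ := 1 - L with hudef
  have hu_ub : u ≤ s := by rw [hudef]; linarith
  have hu_lb : s - s^2/2 ≤ u := by rw [hudef]; linarith
  have hu_half : s/2 ≤ u := arith_u s u hs0 hs1 hu_lb
  have hu0 : 0 < u := by linarith
  -- complex quantities
  set z : ℂ := Complex.exp (Complex.I * t / n) with hzdef
  set w : ℂ := Complex.I * ((t/n : ℝ) : ℂ) with hwdef
  have hw_eq : Complex.I * (t:ℂ) / (n:ℂ) = w := by rw [hwdef]; push_cast; ring
  have hw_norm : ‖w‖ = |t| / n := by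
    rw [hwdef, norm_mul, Complex.norm_I, one_mul, Complex.norm_real,
      Real.norm_eq_abs, abs_div, abs_of_pos hn0]
  have hr_norm : ‖z - 1 - w‖ ≤ (|t|/n)^2 := by
    have h := Complex.norm_exp_sub_one_sub_id_le (x := w) (by
      rw [hw_norm]; exact htn1)
    rw [hw_norm] at h
    rw [hzdef, hw_eq]
    exact h
  have hz1 : ‖z - 1‖ ≤ 2 * |t| / n := by
    have e : z - 1 = (z - 1 - w) + w := by ring
    rw [e]
    calc ‖(z - 1 - w) + w‖ ≤ ‖z - 1 - w‖ + ‖w‖ := norm_add_le _ _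
      _ ≤ (|t|/n)^2 + |t|/n := by rw [hw_norm]; linarith
      _ ≤ 2 * |t| / n := by
          have h : (|t|/n)^2 ≤ |t|/n := by
            have h0 : (0:ℝ) ≤ |t|/n := div_nonneg habs hn0.le
            calc (|t|/n)^2 = (|t|/n)*(|t|/n) := sq (|t|/n) ▸ by ring
              _ ≤ (|t|/n)*1 := mul_le_mul_of_nonneg_left htn1 h0
              _ = |t|/n := mul_one _
          rw [mul_div_assoc]; linarith
  have ht8 : 2 * |t|/n ≤ 1/8 := by rw [div_le_iff₀ hn0]; linarith
  have ht2n : |t|^2/n ≤ 1/8 := by rw [div_le_iff₀ hn0]; linarith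
  have habs2 : (|t|/n)^2 ≤ s/8 := by
    have e : (|t|/n)^2 = (|t|^2/n) * (1/n) := by rw [div_pow, sq_abs]; ring
    rw [e]
    calc (|t|^2/n)*(1/n) ≤ (1/8) * s :=
          mul_le_mul ht2n hs_lb (by positivity) (by norm_num)
      _ = s/8 := by ring
  set B : ℂ := 1 - (L:ℂ) * z with hBdef
  have hLu : (L:ℂ) = 1 - (u:ℂ) := by rw [hudef]; push_cast; ring
  have hB_decomp : B = ((u:ℂ) - w) + ((u:ℂ) * (z - 1) - (z - 1 - w)) := by
    rw [hBdef, hLu]; ring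
  have huw_norm : s/2 ≤ ‖(u:ℂ) - w‖ := by
    have hre : ((u:ℂ) - w).re = u := by
      simp [hwdef, Complex.mul_re]
    calc s/2 ≤ u := hu_half
      _ = ((u:ℂ) - w).re := hre.symm
      _ ≤ |((u:ℂ) - w).re| := le_abs_self _
      _ ≤ ‖(u:ℂ) - w‖ := Complex.abs_re_le_norm _
  have herr_norm : ‖(u:ℂ) * (z - 1) - (z - 1 - w)‖ ≤ s/4 := by
    calc ‖(u:ℂ) * (z - 1) - (z - 1 - w)‖ ≤ ‖(u:ℂ) * (z-1)‖ + ‖z - 1 - w‖ := norm_sub_le _ _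
      _ = u * ‖z-1‖ + ‖z - 1 - w‖ := by
          rw [norm_mul, Complex.norm_real, Real.norm_eq_abs, abs_of_pos hu0]
      _ ≤ s * (2 * |t| / n) + (|t|/n)^2 := by
          have hmm := mul_le_mul hu_ub hz1 (norm_nonneg _) hs0.le
          linarith [hr_norm]
      _ ≤ s * (1/8) + s/8 := by
          have := mul_le_mul_of_nonneg_left ht8 hs0.le
          linarith
      _ ≤ s/4 := by linarith
  have hB_norm : s/4 ≤ ‖B‖ := by
    have hX : ‖(u:ℂ) - w‖ ≤ ‖B‖ + ‖(u:ℂ) * (z - 1) - (z - 1 - w)‖ := by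
      have e : (u:ℂ) - w = B - ((u:ℂ) * (z - 1) - (z - 1 - w)) := by rw [hB_decomp]; ring
      rw [e]
      exact norm_sub_le _ _
    linarith
  have hB_ne : B ≠ 0 := by
    intro h
    rw [h, norm_zero] at hB_norm
    linarith
  -- the numerator N
  set N : ℂ := (u:ℂ) * z * ((s:ℂ) - w) - (s:ℂ) * B with hNdef
  have hN_decomp : N = w * (((s:ℂ) - (u:ℂ)) - (u:ℂ) * (z - 1)) + (s:ℂ) * (z - 1 - w) := by
    rw [hNdef, hBdef, hLu]; ring
  have hsu : |s - u| ≤ s^2/2 := abs_le.2 ⟨by linarith, by linarith⟩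
  set d : ℝ := 1/n with hddef
  have hd0 : 0 < d := by rw [hddef]; positivity
  have hds : d ≤ s := hs_lb
  have hN_norm : ‖N‖ ≤ (|t|/2 + 3*|t|^2) * s^2 * d := by
    have step1 : ‖N‖ ≤ (|t| * d) * (s^2/2 + s*(2 * |t| * d)) + s * ((|t| * d)^2) := by
      rw [hN_decomp]
      have h1 : ‖w * (((s:ℂ) - (u:ℂ)) - (u:ℂ) * (z - 1))‖ ≤ (|t| * d) * (s^2/2 + s*(2 * |t| * d)) := by
        rw [norm_mul, hw_norm]
        have h2 : ‖((s:ℂ) - (u:ℂ)) - (u:ℂ) * (z - 1)‖ ≤ s^2/2 + s*(2 * |t| * d) := by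
          calc ‖((s:ℂ) - (u:ℂ)) - (u:ℂ) * (z - 1)‖
              ≤ ‖(s:ℂ) - (u:ℂ)‖ + ‖(u:ℂ) * (z - 1)‖ := norm_sub_le _ _
            _ ≤ s^2/2 + s*(2 * |t| * d) := by
                have e1 : ((s:ℂ) - (u:ℂ)) = ((s - u : ℝ) : ℂ) := by push_cast; ring
                have e2 : ‖(s:ℂ) - (u:ℂ)‖ = |s - u| := by
                  rw [e1, Complex.norm_real, Real.norm_eq_abs]
                have e3 : ‖(u:ℂ) * (z - 1)‖ ≤ s * (2 * |t| * d) := by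
                  rw [norm_mul, Complex.norm_real, Real.norm_eq_abs, abs_of_pos hu0]
                  have : 2 * |t| / (n:ℝ) = 2 * |t| * d := by rw [hddef]; ring
                  rw [this] at hz1
                  exact mul_le_mul hu_ub hz1 (norm_nonneg _) hs0.le
                rw [e2]
                linarith
        have htd : |t| / (n:ℝ) = |t| * d := by rw [hddef]; ring
        rw [htd]
        exact mul_le_mul_of_nonneg_left h2 (by positivity)
      have h3 : ‖(s:ℂ) * (z - 1 - w)‖ ≤ s * ((|t| * d)^2) := by
        rw [norm_mul, Complex.norm_real, Real.norm_eq_abs, abs_of_pos hs0]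
        have htd : |t| / (n:ℝ) = |t| * d := by rw [hddef]; ring
        rw [htd] at hr_norm
        exact mul_le_mul_of_nonneg_left hr_norm hs0.le
      calc ‖w * (((s:ℂ) - (u:ℂ)) - (u:ℂ) * (z - 1)) + (s:ℂ) * (z - 1 - w)‖
          ≤ ‖w * (((s:ℂ) - (u:ℂ)) - (u:ℂ) * (z - 1))‖ + ‖(s:ℂ) * (z - 1 - w)‖ :=
            norm_add_le _ _
        _ ≤ (|t| * d) * (s^2/2 + s*(2 * |t| * d)) + s * ((|t| * d)^2) := by linarith
    exact arith_N |t| s d ‖N‖ habs hs0 hd0 hds step1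
  -- the error term
  refine ⟨N / ((s:ℂ) * B), ?_, ?_⟩
  · -- the identity
    have hprodc : (∏ j ∈ Finset.Icc 1 (m-1), (1 - (j:ℂ)/(n:ℂ))) = (L:ℂ) := by
      rw [hLdef, Complex.ofReal_prod]
      exact Finset.prod_congr rfl fun j _ => by push_cast; ring
    have hchoosec : ((m.choose 2 : ℕ):ℂ) = (c:ℂ) := by rw [hcdef]; push_cast; rfl
    have hn_ne : (n:ℂ) ≠ 0 := by
      have hnn : 0 < n := by exact_mod_cast hn0
      exact_mod_cast hnn.ne'
    have hc_ne : (c:ℂ) ≠ 0 := Complex.ofReal_ne_zero.2 (by linarith)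
    have hcit_ne : (c:ℂ) - Complex.I * (t:ℂ) ≠ 0 := by
      intro h
      have hre := congrArg Complex.re h
      simp [Complex.mul_re] at hre
      linarith
    have hB_ne' : (1:ℂ) - (L:ℂ) * z ≠ 0 := by rw [← hBdef]; exact hB_ne
    have hu_c : ((u:ℝ):ℂ) = 1 - (L:ℂ) := by rw [hudef]; push_cast; ring
    have hs_c : ((s:ℝ):ℂ) = (c:ℂ)/(n:ℂ) := by rw [hsdef]; push_cast; rfl
    rw [hprodc, hchoosec, hNdef, hBdef, hu_c, hs_c, ← hw_eq]
    exact key_identity L z (c:ℂ) (n:ℂ) (t:ℂ) hn_ne hc_ne hcit_ne hB_ne'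
  · -- the bound
    have e1 : ‖N / ((s:ℂ) * B)‖ = ‖N‖ / (s * ‖B‖) := by
      rw [norm_div, norm_mul, Complex.norm_real, Real.norm_eq_abs, abs_of_pos hs0]
    rw [e1]
    have hC1 : 4 * (|t|/2 + 3*|t|^2) ≤ K := by
      rw [hKdef]; exact arith_C |t| habs
    calc ‖N‖ / (s * ‖B‖) ≤ ((|t|/2 + 3*|t|^2) * s^2 * d) / (s * (s/4)) := by
          apply div_le_div₀ (by positivity) hN_norm (by positivity)
          exact mul_le_mul_of_nonneg_left hB_norm hs0.le
      _ = 4 * (|t|/2 + 3*|t|^2) * d := by field_simp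
      _ ≤ K * d := mul_le_mul_of_nonneg_right hC1 hd0.le
      _ = K / n := by rw [hddef]; ring
      _ ≤ K * (m:ℝ)^4 / n := by
          gcongr
          calc K = K * 1 := (mul_one K).symm
            _ ≤ K * (m:ℝ)^4 := mul_le_mul_of_nonneg_left hm1le (by positivity)
end

section
/- Let ξ_n = ⌊log log n⌋ and λ_m = ∏_{j=1}^{m−1}(1 − j/n). Then for every fixed real t, ∏_{m=2}^{ξ_n} (1 − λ_m)e^{it/n} / (1 − λ_m e^{it/n}) → ∏_{m=2}^∞ C(m,2)/(C(m,2) − it) as n → ∞. -/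
open Filter Finset

lemma prod_diff_bound (s : Finset ℕ) (a b : ℕ → ℂ) (M eps : ℝ) (hM : 1 ≤ M) (heps : 0 ≤ eps)
    (ha : ∀ i ∈ s, ‖a i‖ ≤ M) (hb : ∀ i ∈ s, ‖b i‖ ≤ M)
    (hab : ∀ i ∈ s, ‖a i - b i‖ ≤ eps) :
    ‖∏ i ∈ s, a i - ∏ i ∈ s, b i‖ ≤ s.card * M ^ s.card * eps := by
  classical
  induction s using Finset.induction_on with
  | empty => simp
  | @insert i s hi ih =>
    have hM0 : (0:ℝ) ≤ M := le_trans zero_le_one hM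
    have ha' : ∀ j ∈ s, ‖a j‖ ≤ M := fun j hj => ha j (Finset.mem_insert_of_mem hj)
    have hb' : ∀ j ∈ s, ‖b j‖ ≤ M := fun j hj => hb j (Finset.mem_insert_of_mem hj)
    have hab' : ∀ j ∈ s, ‖a j - b j‖ ≤ eps := fun j hj => hab j (Finset.mem_insert_of_mem hj)
    have IH := ih ha' hb' hab'
    have hPa : ‖∏ j ∈ s, a j‖ ≤ M ^ s.card := by
      refine le_trans (norm_prod_le s a) ?_
      calc ∏ j ∈ s, ‖a j‖ ≤ ∏ _j ∈ s, M :=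
            Finset.prod_le_prod (fun j _ => norm_nonneg _) ha'
        _ = M ^ s.card := Finset.prod_const M
    rw [Finset.prod_insert hi, Finset.prod_insert hi, Finset.card_insert_of_notMem hi]
    have key : a i * ∏ j ∈ s, a j - b i * ∏ j ∈ s, b j
        = (a i - b i) * ∏ j ∈ s, a j + b i * (∏ j ∈ s, a j - ∏ j ∈ s, b j) := by ring
    rw [key]
    have h1 : ‖(a i - b i) * ∏ j ∈ s, a j‖ ≤ eps * M ^ s.card := by
      rw [norm_mul]
      exact mul_le_mul (hab i (Finset.mem_insert_self i s)) hPa (norm_nonneg _) heps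
    have h2 : ‖b i * (∏ j ∈ s, a j - ∏ j ∈ s, b j)‖ ≤ M * (s.card * M ^ s.card * eps) := by
      rw [norm_mul]
      exact mul_le_mul (hb i (Finset.mem_insert_self i s)) IH (norm_nonneg _) hM0
    refine le_trans (norm_add_le _ _) (le_trans (add_le_add h1 h2) ?_)
    have hcard : (0:ℝ) ≤ s.card := Nat.cast_nonneg _
    have hpw : (0:ℝ) ≤ M ^ s.card := pow_nonneg hM0 _
    have e1 : eps * M ^ s.card ≤ eps * (M ^ s.card * M) := by nlinarith [mul_nonneg (mul_nonneg heps hpw) (sub_nonneg.2 hM)]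
    push_cast
    rw [pow_succ]
    nlinarith

lemma prod_one_sub_lb (s : Finset ℕ) (x : ℕ → ℝ) (h0 : ∀ i ∈ s, 0 ≤ x i)
    (h1 : ∀ i ∈ s, x i ≤ 1) :
    1 - ∑ i ∈ s, x i ≤ ∏ i ∈ s, (1 - x i) := by
  classical
  induction s using Finset.induction_on with
  | empty => simp
  | @insert i s hi ih =>
    have h0' : ∀ j ∈ s, 0 ≤ x j := fun j hj => h0 j (Finset.mem_insert_of_mem hj)
    have h1' : ∀ j ∈ s, x j ≤ 1 := fun j hj => h1 j (Finset.mem_insert_of_mem hj)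
    have IH := ih h0' h1'
    rw [Finset.prod_insert hi, Finset.sum_insert hi]
    have hxi : 0 ≤ x i := h0 i (Finset.mem_insert_self i s)
    have hxi1 : x i ≤ 1 := h1 i (Finset.mem_insert_self i s)
    have hsum : 0 ≤ ∑ j ∈ s, x j := Finset.sum_nonneg h0'
    have e1 : (1 - x i) * (1 - ∑ j ∈ s, x j) ≤ (1 - x i) * ∏ j ∈ s, (1 - x j) :=
      mul_le_mul_of_nonneg_left IH (by linarith)
    nlinarith

lemma prod_one_sub_ub (s : Finset ℕ) (x : ℕ → ℝ) (h0 : ∀ i ∈ s, 0 ≤ x i)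
    (h1 : ∀ i ∈ s, x i ≤ 1) :
    (∏ i ∈ s, (1 - x i)) * (1 + ∑ i ∈ s, x i) ≤ 1 := by
  classical
  induction s using Finset.induction_on with
  | empty => simp
  | @insert i s hi ih =>
    have h0' : ∀ j ∈ s, 0 ≤ x j := fun j hj => h0 j (Finset.mem_insert_of_mem hj)
    have h1' : ∀ j ∈ s, x j ≤ 1 := fun j hj => h1 j (Finset.mem_insert_of_mem hj)
    have IH := ih h0' h1'
    rw [Finset.prod_insert hi, Finset.sum_insert hi]
    have hxi : 0 ≤ x i := h0 i (Finset.mem_insert_self i s)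
    have hxi1 : x i ≤ 1 := h1 i (Finset.mem_insert_self i s)
    have hP : 0 ≤ ∏ j ∈ s, (1 - x j) := Finset.prod_nonneg (fun j hj => by linarith [h1' j hj])
    have hsum : 0 ≤ ∑ j ∈ s, x j := Finset.sum_nonneg h0'
    have e1 : (∏ j ∈ s, (1 - x j)) * ((1 - x i) * (1 + x i + ∑ j ∈ s, x j))
        ≤ (∏ j ∈ s, (1 - x j)) * (1 + ∑ j ∈ s, x j) := by
      refine mul_le_mul_of_nonneg_left ?_ hP
      nlinarith
    nlinarith

lemma sum_Icc_one_id (k : ℕ) : (∑ j ∈ Finset.Icc 1 k, j) * 2 = k * (k + 1) := by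
  induction k with
  | zero => simp
  | succ k ih =>
    rw [Finset.sum_Icc_succ_top (by omega : 1 ≤ k + 1), add_mul, ih]
    ring

lemma sum_Icc_choose (m : ℕ) : ∑ j ∈ Finset.Icc 1 (m - 1), j = m.choose 2 := by
  have h1 := sum_Icc_one_id (m - 1)
  have h2 : m.choose 2 * 2 = m * (m - 1) := by
    rw [Nat.choose_two_right]
    exact Nat.div_mul_cancel (Nat.even_mul_pred_self m).two_dvd
  rcases Nat.eq_zero_or_pos m with hm | hm
  · subst hm; simp
  · have h3 : (m - 1) * (m - 1 + 1) = m * (m - 1) := by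
      rw [Nat.sub_add_cancel hm]; ring
    rw [h3] at h1
    exact Nat.eq_of_mul_eq_mul_right (by norm_num) (h1.trans h2.symm)

set_option maxHeartbeats 1000000 in
lemma factor_est (t : ℝ) (n m : ℕ) (h2m : 2 ≤ m) (hmn : (m : ℝ) * m ≤ n)
    (ht : |t| ≤ n) (hn : 1 ≤ n) :
    ‖((1 - (∏ j ∈ Finset.Icc 1 (m - 1), (1 - (j : ℂ) / n))) *
        Complex.exp (Complex.I * t / n)) /
      (1 - (∏ j ∈ Finset.Icc 1 (m - 1), (1 - (j : ℂ) / n)) *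
        Complex.exp (Complex.I * t / n))
      - (m.choose 2 : ℂ) / ((m.choose 2 : ℂ) - Complex.I * t)‖ ≤ 8 * (t ^ 2 + 1) / n := by
  have hn0 : (0 : ℝ) < n := by exact_mod_cast hn
  have hm1 : (1 : ℝ) ≤ m := by exact_mod_cast (le_trans one_le_two h2m)
  set lam : ℝ := ∏ j ∈ Finset.Icc 1 (m - 1), (1 - (j : ℝ) / n) with hlam
  have hlamC : (∏ j ∈ Finset.Icc 1 (m - 1), (1 - (j : ℂ) / n)) = ((lam : ℝ) : ℂ) := by
    rw [hlam]; push_cast; rfl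
  set C : ℝ := (m.choose 2 : ℝ) with hCdef
  have hC1 : 1 ≤ C := by
    have h : 0 < m.choose 2 := Nat.choose_pos h2m
    rw [hCdef]; exact_mod_cast h
  have hCsum : (∑ j ∈ Finset.Icc 1 (m - 1), (j : ℝ)) = C := by
    rw [hCdef, ← Nat.cast_sum]
    exact_mod_cast congrArg (Nat.cast : ℕ → ℝ) (sum_Icc_choose m)
  have hCmm : C ≤ (m : ℝ) * m := by
    have h1 : m.choose 2 ≤ m * m := by
      rw [Nat.choose_two_right]
      exact le_trans (Nat.div_le_self _ _) (Nat.mul_le_mul_left m (Nat.sub_le m 1))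
    rw [hCdef]; exact_mod_cast h1
  have hCn : C ≤ n := le_trans hCmm hmn
  set S : ℝ := C / n with hSdef
  have hS0 : 0 < S := div_pos (lt_of_lt_of_le one_pos hC1) hn0
  have hS1 : S ≤ 1 := (div_le_one hn0).2 hCn
  -- bounds on each j/n
  have hx0 : ∀ j ∈ Finset.Icc 1 (m - 1), 0 ≤ (j : ℝ) / n :=
    fun j _ => div_nonneg (Nat.cast_nonneg j) (le_of_lt hn0)
  have hx1 : ∀ j ∈ Finset.Icc 1 (m - 1), (j : ℝ) / n ≤ 1 := by
    intro j hj
    rw [Finset.mem_Icc] at hj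
    have hjm : (j : ℝ) ≤ m := by
      have : j ≤ m := le_trans hj.2 (Nat.sub_le m 1)
      exact_mod_cast this
    have : (j : ℝ) ≤ n := le_trans hjm (le_trans (by nlinarith) hmn)
    exact (div_le_one hn0).2 this
  have hsumx : (∑ j ∈ Finset.Icc 1 (m - 1), (j : ℝ) / n) = S := by
    rw [← Finset.sum_div, hCsum]
  have hlb : 1 - S ≤ lam := by
    have := prod_one_sub_lb (Finset.Icc 1 (m - 1)) (fun j => (j : ℝ) / n) hx0 hx1
    rwa [hsumx] at this
  have hub : lam * (1 + S) ≤ 1 := by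
    have := prod_one_sub_ub (Finset.Icc 1 (m - 1)) (fun j => (j : ℝ) / n) hx0 hx1
    rwa [hsumx] at this
  have hlam0 : 0 ≤ lam := Finset.prod_nonneg (fun j hj => by linarith [hx1 j hj])
  have h1mlam_lb : S / 2 ≤ 1 - lam := by nlinarith
  have h1mlam_ub : 1 - lam ≤ S := by linarith
  have hs_ub : S - (1 - lam) ≤ S * S := by nlinarith
  have hs_lb : 0 ≤ S - (1 - lam) := by linarith
  -- complex setup
  set z : ℂ := Complex.I * (t : ℂ) / (n : ℂ) with hzdef
  set e : ℂ := Complex.exp z with hedef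
  have habs_z : ‖z‖ = |t| / n := by
    rw [hzdef, norm_div, norm_mul, Complex.norm_I, one_mul, Complex.norm_real, Real.norm_eq_abs,
      Complex.norm_natCast]
  have hz1 : ‖z‖ ≤ 1 := by
    rw [habs_z]; exact (div_le_one hn0).2 ht
  have he1 : ‖e - 1‖ ≤ 2 * (|t| / n) := by
    rw [← habs_z]
    exact Complex.norm_exp_sub_one_le hz1
  have he2 : ‖e - 1 - z‖ ≤ (|t| / n) ^ 2 := by
    rw [← habs_z]
    exact Complex.norm_exp_sub_one_sub_id_le hz1
  have habse : ‖e‖ = 1 := by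
    rw [hedef, Complex.norm_exp]
    have : z.re = 0 := by
      rw [hzdef]
      simp [Complex.div_re, Complex.mul_re]
    rw [this, Real.exp_zero]
  clear_value lam C S z e
  -- denominators
  have hreC : ((m.choose 2 : ℂ) - Complex.I * t).re = C := by
    simp [Complex.sub_re, Complex.mul_re, hCdef]
  have hnormC : C ≤ ‖(m.choose 2 : ℂ) - Complex.I * t‖ := by
    calc C = |((m.choose 2 : ℂ) - Complex.I * t).re| := by rw [hreC]; exact (abs_of_pos (by linarith)).symm
      _ ≤ _ := Complex.abs_re_le_norm _
  have hCne : ((m.choose 2 : ℂ) - Complex.I * t) ≠ 0 := by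
    intro h
    rw [h] at hnormC
    simp at hnormC
    linarith
  have hden1 : 1 - lam ≤ ‖1 - (lam : ℂ) * e‖ := by
    have h := norm_sub_norm_le (1 : ℂ) ((lam : ℂ) * e)
    rw [norm_one, norm_mul, Complex.norm_real, habse, mul_one, Real.norm_eq_abs,
      abs_of_nonneg hlam0] at h
    exact h
  have hden1' : S / 2 ≤ ‖1 - (lam : ℂ) * e‖ := le_trans h1mlam_lb hden1
  have hdne : (1 : ℂ) - (lam : ℂ) * e ≠ 0 := by
    intro h
    rw [h, norm_zero] at hden1'
    linarith
  -- the key identity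
  have hid : ((1 - (lam : ℂ)) * e) / (1 - (lam : ℂ) * e)
      - (m.choose 2 : ℂ) / ((m.choose 2 : ℂ) - Complex.I * t)
      = ((m.choose 2 : ℂ) * (e - 1) - Complex.I * (t : ℂ) * (1 - (lam : ℂ)) * e) /
        ((1 - (lam : ℂ) * e) * ((m.choose 2 : ℂ) - Complex.I * t)) := by
    field_simp
    ring
  -- numerator decomposition
  have hnne : (n : ℂ) ≠ 0 := by
    exact_mod_cast (Nat.cast_ne_zero (R := ℂ)).2 (by omega)
  have hCc : ((m.choose 2 : ℂ)) = ((C : ℝ) : ℂ) := by push_cast [hCdef]; ring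
  have hNid : (m.choose 2 : ℂ) * (e - 1) - Complex.I * (t : ℂ) * (1 - (lam : ℂ)) * e
      = (m.choose 2 : ℂ) * (e - 1 - z)
        + Complex.I * (t : ℂ) * (((S : ℝ) : ℂ) - (1 - (lam : ℂ)))
        - Complex.I * (t : ℂ) * (1 - (lam : ℂ)) * (e - 1) := by
    have hSc : ((S : ℝ) : ℂ) = ((C : ℝ) : ℂ) / (n : ℂ) := by
      rw [hSdef]; push_cast; ring
    rw [hzdef, hSc, ← hCc]
    field_simp
    ring
  -- numerator bound
  have hNbound : ‖(m.choose 2 : ℂ) * (e - 1) - Complex.I * (t : ℂ) * (1 - (lam : ℂ)) * e‖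
      ≤ (3 * t ^ 2 + |t|) * (C * C) / ((n:ℝ) * n) := by
    rw [hNid]
    have b1 : ‖(m.choose 2 : ℂ) * (e - 1 - z)‖ ≤ C * ((|t| / n) ^ 2) := by
      rw [norm_mul, hCc, Complex.norm_real, Real.norm_eq_abs, abs_of_pos (by linarith)]
      exact mul_le_mul_of_nonneg_left he2 (by linarith)
    have b2 : ‖Complex.I * (t : ℂ) * (((S : ℝ) : ℂ) - (1 - (lam : ℂ)))‖ ≤ |t| * (S * S) := by
      have hcast : (((S : ℝ) : ℂ) - (1 - (lam : ℂ))) = (((S - (1 - lam) : ℝ)) : ℂ) := by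
        push_cast; ring
      rw [hcast, norm_mul, norm_mul, Complex.norm_I, one_mul, Complex.norm_real,
        Complex.norm_real, Real.norm_eq_abs, Real.norm_eq_abs,
        abs_of_nonneg hs_lb]
      exact mul_le_mul_of_nonneg_left hs_ub (abs_nonneg t)
    have b3 : ‖Complex.I * (t : ℂ) * (1 - (lam : ℂ)) * (e - 1)‖ ≤ |t| * S * (2 * (|t| / n)) := by
      have hcast : ((1 : ℂ) - (lam : ℂ)) = (((1 - lam : ℝ)) : ℂ) := by push_cast; ring
      rw [hcast, norm_mul, norm_mul, norm_mul, Complex.norm_I, one_mul, Complex.norm_real,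
        Complex.norm_real, Real.norm_eq_abs, Real.norm_eq_abs, abs_of_nonneg (by linarith : (0:ℝ) ≤ 1 - lam)]
      have : |t| * (1 - lam) ≤ |t| * S := mul_le_mul_of_nonneg_left h1mlam_ub (abs_nonneg t)
      exact mul_le_mul (by exact this) he1 (norm_nonneg _) (by positivity)
    calc ‖_ + _ - _‖ ≤ ‖(m.choose 2 : ℂ) * (e - 1 - z)
          + Complex.I * (t : ℂ) * (((S : ℝ) : ℂ) - (1 - (lam : ℂ)))‖
          + ‖Complex.I * (t : ℂ) * (1 - (lam : ℂ)) * (e - 1)‖ := norm_sub_le _ _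
      _ ≤ ‖(m.choose 2 : ℂ) * (e - 1 - z)‖
          + ‖Complex.I * (t : ℂ) * (((S : ℝ) : ℂ) - (1 - (lam : ℂ)))‖
          + ‖Complex.I * (t : ℂ) * (1 - (lam : ℂ)) * (e - 1)‖ := by
            have := norm_add_le ((m.choose 2 : ℂ) * (e - 1 - z))
              (Complex.I * (t : ℂ) * (((S : ℝ) : ℂ) - (1 - (lam : ℂ))))
            linarith
      _ ≤ C * ((|t| / n) ^ 2) + |t| * (S * S) + |t| * S * (2 * (|t| / n)) := by linarith
      _ ≤ (3 * t ^ 2 + |t|) * (C * C) / ((n:ℝ) * n) := by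
          have hnn : (0:ℝ) < (n:ℝ) * n := by positivity
          have heq : C * ((|t| / n) ^ 2) + |t| * (S * S) + |t| * S * (2 * (|t| / n))
              = (3 * C * t ^ 2 + |t| * (C * C)) / ((n:ℝ) * n) := by
            rw [hSdef, div_pow, sq_abs]
            field_simp
            ring_nf
            rw [sq_abs]
            ring
          rw [heq]
          gcongr
          have hCC : C ≤ C * C := by nlinarith
          nlinarith [mul_le_mul_of_nonneg_right hCC (sq_nonneg t)]
  -- denominator bound
  have hDbound : C * C / (2 * n) ≤ ‖(1 - (lam : ℂ) * e) * ((m.choose 2 : ℂ) - Complex.I * t)‖ := by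
    rw [norm_mul]
    calc C * C / (2 * n) = (S / 2) * C := by rw [hSdef]; ring
      _ ≤ ‖1 - (lam : ℂ) * e‖ * ‖(m.choose 2 : ℂ) - Complex.I * t‖ :=
          mul_le_mul hden1' hnormC (by linarith) (norm_nonneg _)
  have hDpos : (0:ℝ) < C * C / (2 * n) := by positivity
  have hfin : ((3 * t ^ 2 + |t|) * (C * C) / ((n:ℝ) * n)) / (C * C / (2 * n))
      = (6 * t ^ 2 + 2 * |t|) / n := by
    have hCne0 : C ≠ 0 := by linarith
    have hnne0 : (n:ℝ) ≠ 0 := ne_of_gt hn0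
    field_simp
    ring
  rw [hlamC, hid, norm_div]
  calc ‖(m.choose 2 : ℂ) * (e - 1) - Complex.I * (t : ℂ) * (1 - (lam : ℂ)) * e‖ /
        ‖(1 - (lam : ℂ) * e) * ((m.choose 2 : ℂ) - Complex.I * t)‖
      ≤ ((3 * t ^ 2 + |t|) * (C * C) / ((n:ℝ) * n)) / (C * C / (2 * n)) :=
        div_le_div₀ (by positivity) hNbound hDpos hDbound
    _ = (6 * t ^ 2 + 2 * |t|) / n := hfin
    _ ≤ 8 * (t ^ 2 + 1) / n := by
        gcongr
        nlinarith [sq_nonneg (|t| - 1), sq_abs t]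

lemma c_norm_le_one (t : ℝ) (m : ℕ) (h2m : 2 ≤ m) :
    ‖(m.choose 2 : ℂ) / ((m.choose 2 : ℂ) - Complex.I * t)‖ ≤ 1 := by
  have hC1 : (1:ℝ) ≤ (m.choose 2 : ℝ) := by
    have h : 0 < m.choose 2 := Nat.choose_pos h2m
    exact_mod_cast h
  have hre : ((m.choose 2 : ℂ) - Complex.I * t).re = (m.choose 2 : ℝ) := by
    simp [Complex.sub_re, Complex.mul_re]
  have hnormC : (m.choose 2 : ℝ) ≤ ‖(m.choose 2 : ℂ) - Complex.I * t‖ := by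
    calc (m.choose 2 : ℝ) = |((m.choose 2 : ℂ) - Complex.I * t).re| := by
          rw [hre]; exact (abs_of_pos (by linarith)).symm
      _ ≤ _ := Complex.abs_re_le_norm _
  rw [norm_div]
  have hnum : ‖(m.choose 2 : ℂ)‖ = (m.choose 2 : ℝ) := by
    rw [Complex.norm_natCast]
  rw [hnum]
  have hpos : (0:ℝ) < ‖(m.choose 2 : ℂ) - Complex.I * t‖ := by linarith
  rw [div_le_one hpos]
  exact hnormC

/-- With `ξ_n = ⌊log log n⌋` and `λ_m = ∏_{j=1}^{m-1}(1 - j/n)`, for every fixed real `t`,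
`∏_{m=2}^{ξ_n} (1-λ_m)e^{it/n}/(1-λ_m e^{it/n})` tends, as `n → ∞`, to the value
`L` of the convergent infinite product `∏_{m=2}^∞ C(m,2)/(C(m,2)-it)`. -/
theorem stmt14 (t : ℝ) (L : ℂ)
    (hL : Tendsto (fun N : ℕ => ∏ m ∈ Finset.Icc 2 N,
        ((m.choose 2 : ℂ) / ((m.choose 2 : ℂ) - Complex.I * t))) atTop (nhds L)) :
    Tendsto (fun n : ℕ =>
        ∏ m ∈ Finset.Icc 2 (Nat.floor (Real.log (Real.log n))),
          ((1 - (∏ j ∈ Finset.Icc 1 (m - 1), (1 - (j : ℂ) / n))) *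
              Complex.exp (Complex.I * t / n)) /
            (1 - (∏ j ∈ Finset.Icc 1 (m - 1), (1 - (j : ℂ) / n)) *
              Complex.exp (Complex.I * t / n)))
      atTop (nhds L) := by
  have hlltop : Tendsto (fun n : ℕ => Real.log (Real.log n)) atTop atTop :=
    Real.tendsto_log_atTop.comp (Real.tendsto_log_atTop.comp tendsto_natCast_atTop_atTop)
  have hξtop : Tendsto (fun n : ℕ => Nat.floor (Real.log (Real.log n))) atTop atTop :=
    tendsto_nat_floor_atTop.comp hlltop
  have hQ : Tendsto (fun n : ℕ => ∏ m ∈ Finset.Icc 2 (Nat.floor (Real.log (Real.log n))),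
      ((m.choose 2 : ℂ) / ((m.choose 2 : ℂ) - Complex.I * t))) atTop (nhds L) :=
    hL.comp hξtop
  have hK0 : (0:ℝ) ≤ 8 * (t ^ 2 + 1) := by positivity
  -- the difference tends to zero
  have hdiff : Tendsto (fun n : ℕ =>
      (∏ m ∈ Finset.Icc 2 (Nat.floor (Real.log (Real.log n))),
          ((1 - (∏ j ∈ Finset.Icc 1 (m - 1), (1 - (j : ℂ) / n))) *
              Complex.exp (Complex.I * t / n)) /
            (1 - (∏ j ∈ Finset.Icc 1 (m - 1), (1 - (j : ℂ) / n)) *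
              Complex.exp (Complex.I * t / n)))
        - ∏ m ∈ Finset.Icc 2 (Nat.floor (Real.log (Real.log n))),
          ((m.choose 2 : ℂ) / ((m.choose 2 : ℂ) - Complex.I * t))) atTop (nhds 0) := by
    have hg2 : Tendsto (fun n : ℕ => (Real.log n) ^ 2 / (n : ℝ)) atTop (nhds 0) := by
      have hb := Real.tendsto_pow_log_div_mul_add_atTop 1 0 2 one_ne_zero
      have hb2 := hb.comp (tendsto_natCast_atTop_atTop (R := ℝ))
      refine hb2.congr (fun n => ?_)
      simp [Function.comp]
    have hg : Tendsto (fun n : ℕ => Real.log n * Real.log n * (8 * (t ^ 2 + 1) / n))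
        atTop (nhds 0) := by
      have := hg2.const_mul (8 * (t ^ 2 + 1))
      rw [mul_zero] at this
      refine this.congr (fun n => ?_)
      ring
    refine squeeze_zero_norm' ?_ hg
    -- eventual conditions
    have ev1 : ∀ᶠ n : ℕ in atTop, (1:ℝ) ≤ Real.log (Real.log n) :=
      hlltop.eventually_ge_atTop 1
    have ev2 : ∀ᶠ n : ℕ in atTop, (Real.log n) ^ 2 ≤ (n : ℝ) := by
      have h1 : ∀ᶠ n : ℕ in atTop, (Real.log n) ^ 2 / (n : ℝ) ≤ 1 :=
        hg2.eventually (eventually_le_nhds one_pos)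
      filter_upwards [h1, eventually_ge_atTop 1] with n hn hn1
      have hn0 : (0:ℝ) < n := by exact_mod_cast hn1
      have hne : (n:ℝ) ≠ 0 := ne_of_gt hn0
      calc (Real.log n) ^ 2 = (Real.log n) ^ 2 / (n:ℝ) * (n:ℝ) := by field_simp
        _ ≤ 1 * (n:ℝ) := mul_le_mul_of_nonneg_right hn (le_of_lt hn0)
        _ = (n:ℝ) := one_mul _
    have ev4 : ∀ᶠ n : ℕ in atTop, |t| ≤ (n : ℝ) :=
      (tendsto_natCast_atTop_atTop (R := ℝ)).eventually_ge_atTop |t|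
    have ev5 : ∀ᶠ n : ℕ in atTop, 8 * (t ^ 2 + 1) / (n:ℝ) ≤ 1 := by
      have := tendsto_const_div_atTop_nhds_zero_nat (8 * (t ^ 2 + 1))
      exact this.eventually (eventually_le_nhds one_pos)
    filter_upwards [ev1, ev2, ev4, ev5, eventually_ge_atTop 2] with n h1 h2 h4 h5 h3
    set k := Nat.floor (Real.log (Real.log n)) with hk
    have hn1R : (1:ℝ) < n := by exact_mod_cast lt_of_lt_of_le one_lt_two h3
    have hn1 : 1 ≤ n := le_trans one_le_two h3
    have hlogpos : 0 < Real.log n := Real.log_pos hn1R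
    have hll0 : (0:ℝ) ≤ Real.log (Real.log n) := by linarith
    have hkle : (k : ℝ) ≤ Real.log (Real.log n) := Nat.floor_le hll0
    have hlls : Real.log (Real.log n) ≤ Real.log n := Real.log_le_self (le_of_lt hlogpos)
    have hkleL : (k : ℝ) ≤ Real.log n := le_trans hkle hlls
    -- apply the product difference bound
    have key := prod_diff_bound (Finset.Icc 2 k)
      (fun m => ((1 - (∏ j ∈ Finset.Icc 1 (m - 1), (1 - (j : ℂ) / n))) *
          Complex.exp (Complex.I * t / n)) /
        (1 - (∏ j ∈ Finset.Icc 1 (m - 1), (1 - (j : ℂ) / n)) *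
          Complex.exp (Complex.I * t / n)))
      (fun m => (m.choose 2 : ℂ) / ((m.choose 2 : ℂ) - Complex.I * t))
      2 (8 * (t ^ 2 + 1) / n) one_le_two (by positivity)
      ?_ ?_ ?_
    · -- chain the bound
      refine le_trans key ?_
      have hcard : ((Finset.Icc 2 k).card : ℝ) ≤ (k : ℝ) := by
        rw [Nat.card_Icc]
        have : k + 1 - 2 ≤ k := by omega
        exact_mod_cast this
      have hpow : (2:ℝ) ^ (Finset.Icc 2 k).card ≤ Real.log n := by
        calc (2:ℝ) ^ (Finset.Icc 2 k).card ≤ 2 ^ k := by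
              apply pow_le_pow_right₀ one_le_two
              rw [Nat.card_Icc]; omega
          _ ≤ (Real.exp 1) ^ k := by
              apply pow_le_pow_left₀ (by norm_num)
              exact le_of_lt (lt_trans (by norm_num) Real.exp_one_gt_d9)
          _ = Real.exp k := Real.exp_one_pow k
          _ ≤ Real.exp (Real.log (Real.log n)) := Real.exp_le_exp.2 hkle
          _ = Real.log n := Real.exp_log hlogpos
      have heps0 : (0:ℝ) ≤ 8 * (t ^ 2 + 1) / n := by positivity
      have h2pow0 : (0:ℝ) ≤ (2:ℝ) ^ (Finset.Icc 2 k).card := by positivity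
      calc ((Finset.Icc 2 k).card : ℝ) * 2 ^ (Finset.Icc 2 k).card * (8 * (t ^ 2 + 1) / n)
          ≤ Real.log n * Real.log n * (8 * (t ^ 2 + 1) / n) := by
            apply mul_le_mul_of_nonneg_right ?_ heps0
            exact mul_le_mul (le_trans hcard hkleL) hpow h2pow0 (le_of_lt hlogpos)
        _ = Real.log n * Real.log n * (8 * (t ^ 2 + 1) / n) := rfl
    · -- bound on the a's
      intro m hm
      rw [Finset.mem_Icc] at hm
      have hmm : (m:ℝ) * m ≤ n := by
        have hmk : (m:ℝ) ≤ k := by exact_mod_cast hm.2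
        have hm0 : (0:ℝ) ≤ m := Nat.cast_nonneg m
        calc (m:ℝ) * m ≤ Real.log n * Real.log n := mul_le_mul (le_trans hmk hkleL)
              (le_trans hmk hkleL) hm0 (le_of_lt hlogpos)
          _ = (Real.log n) ^ 2 := (sq (Real.log n)).symm
          _ ≤ n := h2
      have hest := factor_est t n m hm.1 hmm h4 hn1
      have hc := c_norm_le_one t m hm.1
      have : ‖((1 - (∏ j ∈ Finset.Icc 1 (m - 1), (1 - (j : ℂ) / n))) *
          Complex.exp (Complex.I * t / n)) /
        (1 - (∏ j ∈ Finset.Icc 1 (m - 1), (1 - (j : ℂ) / n)) *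
          Complex.exp (Complex.I * t / n))‖
          ≤ ‖(m.choose 2 : ℂ) / ((m.choose 2 : ℂ) - Complex.I * t)‖ + 8 * (t ^ 2 + 1) / n := by
        have htri := norm_le_norm_add_norm_sub' (((1 - (∏ j ∈ Finset.Icc 1 (m - 1), (1 - (j : ℂ) / n))) *
          Complex.exp (Complex.I * t / n)) /
            (1 - (∏ j ∈ Finset.Icc 1 (m - 1), (1 - (j : ℂ) / n)) *
          Complex.exp (Complex.I * t / n)))
          ((m.choose 2 : ℂ) / ((m.choose 2 : ℂ) - Complex.I * t))
        linarith
      linarith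
    · -- bound on the b's
      intro m hm
      rw [Finset.mem_Icc] at hm
      exact le_trans (c_norm_le_one t m hm.1) one_le_two
    · -- the per-factor estimates
      intro m hm
      rw [Finset.mem_Icc] at hm
      have hmm : (m:ℝ) * m ≤ n := by
        have hmk : (m:ℝ) ≤ k := by exact_mod_cast hm.2
        have hm0 : (0:ℝ) ≤ m := Nat.cast_nonneg m
        calc (m:ℝ) * m ≤ Real.log n * Real.log n := mul_le_mul (le_trans hmk hkleL)
              (le_trans hmk hkleL) hm0 (le_of_lt hlogpos)
          _ = (Real.log n) ^ 2 := (sq (Real.log n)).symm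
          _ ≤ n := h2
      exact factor_est t n m hm.1 hmm h4 hn1
  have := hQ.add hdiff
  rw [add_zero] at this
  refine this.congr (fun n => ?_)
  ring
end

section
/- For every real t, ∏_{m=2}^∞ C(m,2)/(C(m,2) − it) = −2πit / cos((π/2)√(1+8it)), with the convention that at t = 0 the right-hand side is interpreted as its limit 1. -/
open Filter Real Finset Nat

private lemma prodIcc_natCast (n : ℕ) : ∏ k ∈ Icc 1 n, (k : ℂ) = n ! := by
  induction n with
  | zero => simp
  | succ n ih =>
    rw [Finset.prod_Icc_succ_top (by omega), ih]
    push_cast [Nat.factorial_succ]; ring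

private lemma prodIcc_natCast_succ (n : ℕ) :
    ∏ k ∈ Icc 1 n, ((k : ℂ) + 1) = (n + 1)! := by
  induction n with
  | zero => simp
  | succ n ih =>
    rw [Finset.prod_Icc_succ_top (by omega), ih]
    push_cast [Nat.factorial_succ]; ring

private lemma prodIcc_add (z : ℂ) (n : ℕ) :
    z * ∏ k ∈ Icc 1 n, ((k : ℂ) + z) = ∏ j ∈ Finset.range (n + 1), (z + j) := by
  induction n with
  | zero => simp
  | succ n ih =>
    rw [Finset.prod_Icc_succ_top (by omega), Finset.prod_range_succ, ← ih]
    push_cast; ring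

/-- For every real `t`, `∏_{m=2}^∞ C(m,2)/(C(m,2)-it) = -2πit / cos((π/2)√(1+8it))`,
with the right-hand side interpreted as its limit `1` when `t = 0`. -/
theorem stmt15 (t : ℝ) :
    Tendsto (fun N : ℕ => ∏ m ∈ Finset.Icc 2 N,
        ((m.choose 2 : ℂ) / ((m.choose 2 : ℂ) - Complex.I * t))) atTop
      (nhds (if t = 0 then 1 else
        -2 * π * Complex.I * t /
          Complex.cos (π / 2 * (1 + 8 * Complex.I * t) ^ ((1 : ℂ) / 2)))) := by
  by_cases ht : t = 0
  · simp only [ht, if_pos rfl]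
    have : ∀ N : ℕ, ∏ m ∈ Finset.Icc 2 N,
        ((m.choose 2 : ℂ) / ((m.choose 2 : ℂ) - Complex.I * (0:ℝ))) = 1 := by
      intro N
      apply Finset.prod_eq_one
      intro m hm
      have hm2 : 2 ≤ m := (Finset.mem_Icc.mp hm).1
      have hpos : 0 < m.choose 2 := Nat.choose_pos hm2
      have : (m.choose 2 : ℂ) ≠ 0 := by exact_mod_cast hpos.ne'
      simp [div_self this]
    simp only [this]
    exact tendsto_const_nhds
  · rw [if_neg ht]
    set s : ℂ := (1 + 8 * Complex.I * t) ^ ((1 : ℂ) / 2) with hs_def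
    have hs2 : s ^ 2 = 1 + 8 * Complex.I * t := by
      rw [hs_def, show (1 : ℂ) / 2 = ((2 : ℕ) : ℂ)⁻¹ by norm_num]
      exact Complex.cpow_nat_inv_pow _ two_ne_zero
    have hsim : s.im ≠ 0 := by
      intro h
      have := congrArg Complex.im hs2
      simp [pow_two, Complex.mul_im, Complex.add_im, Complex.mul_re, h] at this
      exact ht (by exact_mod_cast this)
    obtain ⟨α, hα_def⟩ : ∃ α : ℂ, α = (1 + s) / 2 := ⟨_, rfl⟩
    obtain ⟨β, hβ_def⟩ : ∃ β : ℂ, β = (1 - s) / 2 := ⟨_, rfl⟩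
    have hab : α * β = -2 * Complex.I * t := by
      have : α * β = (1 - s ^ 2) / 4 := by rw [hα_def, hβ_def]; ring
      rw [this, hs2]; ring
    have hαim : α.im = s.im / 2 := by
      rw [hα_def]; simp [Complex.div_im, Complex.add_im]
    have hβim : β.im = -s.im / 2 := by
      rw [hβ_def]; simp [Complex.div_im, Complex.sub_im]
    have hαk : ∀ k : ℕ, (k : ℂ) + α ≠ 0 := by
      intro k h
      have := congrArg Complex.im h
      simp [Complex.add_im, hαim] at this
      exact hsim this
    have hβk : ∀ k : ℕ, (k : ℂ) + β ≠ 0 := by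
      intro k h
      have := congrArg Complex.im h
      simp [Complex.add_im, hβim] at this
      exact hsim this
    have hα0 : α ≠ 0 := by simpa using hαk 0
    have hβ0 : β ≠ 0 := by simpa using hβk 0
    -- the partial product over Icc 1 n
    set P : ℕ → ℂ := fun n => ∏ k ∈ Icc 1 n,
        (((k : ℂ) * (k + 1)) / (((k : ℂ) + α) * ((k : ℂ) + β))) with hP_def
    have key : ∀ n : ℕ, 1 ≤ n → P n =
        (((n : ℂ) + 1) / n) * (α * β * Complex.GammaSeq α n * Complex.GammaSeq β n) := by
      intro n hn
      have hn0 : (n : ℂ) ≠ 0 := Nat.cast_ne_zero.mpr (by omega)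
      have hfac : ((n ! : ℕ) : ℂ) ≠ 0 := Nat.cast_ne_zero.mpr n.factorial_ne_zero
      have hPα : ∏ k ∈ Icc 1 n, ((k : ℂ) + α) ≠ 0 :=
        Finset.prod_ne_zero_iff.mpr fun k _ => hαk k
      have hPβ : ∏ k ∈ Icc 1 n, ((k : ℂ) + β) ≠ 0 :=
        Finset.prod_ne_zero_iff.mpr fun k _ => hβk k
      have hpowα : (n : ℂ) ^ α ≠ 0 := fun h => hn0 ((Complex.cpow_eq_zero_iff _ _).mp h).1
      have hpowβ : (n : ℂ) ^ β ≠ 0 := fun h => hn0 ((Complex.cpow_eq_zero_iff _ _).mp h).1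
      have hpow : (n : ℂ) ^ α * (n : ℂ) ^ β = n := by
        rw [← Complex.cpow_add _ _ hn0,
          show α + β = 1 by rw [hα_def, hβ_def]; ring, Complex.cpow_one]
      rw [hP_def]
      simp only [Complex.GammaSeq, ← prodIcc_add α n, ← prodIcc_add β n]
      rw [Finset.prod_div_distrib, Finset.prod_mul_distrib, Finset.prod_mul_distrib,
        prodIcc_natCast, prodIcc_natCast_succ]
      have hfacsucc : (((n + 1)! : ℕ) : ℂ) = ((n : ℂ) + 1) * n ! := by
        push_cast [Nat.factorial_succ]; ring
      rw [hfacsucc]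
      field_simp
      linear_combination (-1 : ℂ) * hpow
    -- limit of P
    have h1 : Tendsto (fun n : ℕ => ((n : ℂ) + 1) / n) atTop (nhds 1) := by
      have h0 : Tendsto (fun n : ℕ => (((n : ℝ)⁻¹ : ℝ) : ℂ)) atTop (nhds 0) := by
        rw [show (0 : ℂ) = ((0 : ℝ) : ℂ) by norm_num]
        exact (Complex.continuous_ofReal.tendsto 0).comp tendsto_inv_atTop_nhds_zero_nat
      have h' := (tendsto_const_nhds : Tendsto (fun _ : ℕ => (1 : ℂ)) atTop (nhds 1)).add h0
      rw [add_zero] at h'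
      refine Tendsto.congr' ?_ h'
      filter_upwards [eventually_ge_atTop 1] with n hn
      have hn0 : (n : ℂ) ≠ 0 := Nat.cast_ne_zero.mpr (by omega)
      push_cast
      field_simp
    have h2 : Tendsto (fun n : ℕ => α * β * Complex.GammaSeq α n * Complex.GammaSeq β n)
        atTop (nhds (α * β * Complex.Gamma α * Complex.Gamma β)) := by
      exact ((tendsto_const_nhds.mul (Complex.GammaSeq_tendsto_Gamma α)).mul
        (Complex.GammaSeq_tendsto_Gamma β))
    have hPlim : Tendsto P atTop
        (nhds (1 * (α * β * Complex.Gamma α * Complex.Gamma β))) := by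
      refine Tendsto.congr' ?_ (h1.mul h2)
      filter_upwards [eventually_ge_atTop 1] with n hn
      exact (key n hn).symm
    -- identify the limit value
    have hval : 1 * (α * β * Complex.Gamma α * Complex.Gamma β) =
        -2 * π * Complex.I * t / Complex.cos (π / 2 * s) := by
      have hβ1 : β = 1 - α := by rw [hα_def, hβ_def]; ring
      rw [one_mul, mul_assoc, hβ1, Complex.Gamma_mul_Gamma_one_sub,
        show (π : ℂ) * α = π / 2 + π / 2 * s by rw [hα_def]; ring,
        Complex.sin_add, Complex.sin_pi_div_two, Complex.cos_pi_div_two, one_mul,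
        zero_mul, add_zero,
        show α * (1 - α) = -2 * Complex.I * t by rw [← hβ1]; exact hab]
      ring
    rw [← hval]
    -- reindex the original product
    have reindex : ∀ N : ℕ, (∏ m ∈ Finset.Icc 2 N,
        ((m.choose 2 : ℂ) / ((m.choose 2 : ℂ) - Complex.I * t))) = P (N - 1) := by
      intro N
      have hterm : ∀ k : ℕ, 1 ≤ k →
          (((k + 1).choose 2 : ℂ) / (((k + 1).choose 2 : ℂ) - Complex.I * t)) =
          ((k : ℂ) * (k + 1)) / (((k : ℂ) + α) * ((k : ℂ) + β)) := by
        intro k _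
        have hc : (((k + 1).choose 2 : ℕ) : ℂ) = (k : ℂ) * (k + 1) / 2 := by
          rw [Nat.cast_choose_two]
          push_cast; ring
        have hden : ((k : ℂ) + α) * ((k : ℂ) + β) = (k : ℂ) * (k + 1) - 2 * Complex.I * t := by
          have hsum : α + β = 1 := by rw [hα_def, hβ_def]; ring
          have : ((k : ℂ) + α) * ((k : ℂ) + β) = (k:ℂ)^2 + (k:ℂ) * (α + β) + α * β := by ring
          rw [this, hsum, hab]; ring
        have hdne : ((k : ℂ) + α) * ((k : ℂ) + β) ≠ 0 := mul_ne_zero (hαk k) (hβk k)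
        rw [hden] at hdne
        have h2 : ((k : ℂ) * (k + 1) / 2 - Complex.I * t) ≠ 0 := by
          intro h
          apply hdne
          have he : (k : ℂ) * (k + 1) - 2 * Complex.I * t =
              2 * ((k : ℂ) * (k + 1) / 2 - Complex.I * t) := by ring
          rw [he, h, mul_zero]
        rw [hc, hden, div_eq_div_iff h2 hdne]
        ring
      match N with
      | 0 => simp [hP_def]
      | 1 => rw [hP_def]; norm_num
      | (n + 2) =>
        have : Finset.Icc 2 (n + 2) =
            Finset.map (addRightEmbedding 1) (Finset.Icc 1 (n + 1)) := by
          rw [Finset.map_add_right_Icc]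
        rw [this, Finset.prod_map, hP_def]
        show (∏ k ∈ Icc 1 (n+1), (((k + 1).choose 2 : ℂ) /
            (((k + 1).choose 2 : ℂ) - Complex.I * t))) = _
        refine Finset.prod_congr (by norm_num) fun k hk => ?_
        exact hterm k (Finset.mem_Icc.mp hk).1
    simp only [reindex]
    exact hPlim.comp (tendsto_sub_atTop_nat 1)
end
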